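/- Let (E+, E−) be a minimum solution to a reduced yes-instance (G, k) of the diamond-free editing problem, and let K be a maximal clique of G containing both ends of some edge in E−. Then either K is a small type-I maximal clique of G, or K is a type-II maximal clique of G and there exists a small type-I maximal clique K' of G with K ∩ K' ≠ ∅. -/

import Mathlib

variable {V : Type*}

/-- An induced diamond on vertices `u v x y`: all five edges present except `xy`;
`uv` is the cross edge and `xy` the missing edge. -/
def IsDiamond (G : SimpleGraph V) (u v x y : V) : Prop :=
  u ≠ v ∧ u ≠ x ∧ u ≠ y ∧ v ≠ x ∧ v ≠ y ∧ x ≠ y ∧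
  G.Adj u v ∧ G.Adj u x ∧ G.Adj u y ∧ G.Adj v x ∧ G.Adj v y ∧ ¬ G.Adj x y

def DiamondFree (G : SimpleGraph V) : Prop :=
  ∀ u v x y : V, ¬ IsDiamond G u v x y

/-- The graph `G △ E±` obtained from `G` by adding the edges of `Ep` and
deleting the edges of `Em`. -/
def EditedGraph (G : SimpleGraph V) (Ep Em : Finset (Sym2 V)) : SimpleGraph V :=
  SimpleGraph.fromEdgeSet ((G.edgeSet ∪ ↑Ep) \ ↑Em)

/-- `(Ep, Em)` is a solution of the instance `(G, k)` of diamond-free editing: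
`Ep` is a set of non-edges of `G`, `Em` a set of edges of `G`,
`|Ep| + |Em| ≤ k`, and the edited graph is diamond-free. -/
def IsSolution (G : SimpleGraph V) (k : ℕ) (Ep Em : Finset (Sym2 V)) : Prop :=
  (∀ e ∈ Ep, e ∉ G.edgeSet ∧ ¬ e.IsDiag) ∧
  (∀ e ∈ Em, e ∈ G.edgeSet) ∧
  Ep.card + Em.card ≤ k ∧
  DiamondFree (EditedGraph G Ep Em)

def YesInstance (G : SimpleGraph V) (k : ℕ) : Prop :=
  ∃ Ep Em : Finset (Sym2 V), IsSolution G k Ep Em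

/-- A minimum solution: a solution such that no valid edit set of strictly
smaller total size makes the graph diamond-free. -/
def IsMinSolution (G : SimpleGraph V) (k : ℕ) (Ep Em : Finset (Sym2 V)) : Prop :=
  IsSolution G k Ep Em ∧
  ∀ Ep' Em' : Finset (Sym2 V),
    (∀ e ∈ Ep', e ∉ G.edgeSet ∧ ¬ e.IsDiag) →
    (∀ e ∈ Em', e ∈ G.edgeSet) →
    DiamondFree (EditedGraph G Ep' Em') →
    Ep.card + Em.card ≤ Ep'.card + Em'.card

/-- There are `2k+2` distinct vertices `x 0, y 0, …, x k, y k` in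
`N(u) ∩ N(v)` with each `x i y i` an edge of `G`. -/
def EdgePairedWitness (G : SimpleGraph V) (k : ℕ) (u v : V) : Prop :=
  ∃ x y : Fin (k + 1) → V,
    Function.Injective (Sum.elim x y) ∧
    (∀ i, G.Adj u (x i) ∧ G.Adj v (x i) ∧ G.Adj u (y i) ∧ G.Adj v (y i)) ∧
    (∀ i, G.Adj (x i) (y i))

/-- There are `2k+2` distinct vertices `x 0, y 0, …, x k, y k` in
`N(u) ∩ N(v)` with each `x i y i` a non-edge of `G`. -/
def NonEdgePairedWitness (G : SimpleGraph V) (k : ℕ) (u v : V) : Prop :=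
  ∃ x y : Fin (k + 1) → V,
    Function.Injective (Sum.elim x y) ∧
    (∀ i, G.Adj u (x i) ∧ G.Adj v (x i) ∧ G.Adj u (y i) ∧ G.Adj v (y i)) ∧
    (∀ i, ¬ G.Adj (x i) (y i))

/-- The instance `(G, k)` is reduced: neither sunflower rule applies. -/
def Reduced (G : SimpleGraph V) (k : ℕ) : Prop :=
  (∀ u v : V, u ≠ v → ¬ G.Adj u v → ¬ EdgePairedWitness G k u v) ∧
  (∀ u v : V, G.Adj u v → ¬ NonEdgePairedWitness G k u v)

/-- `K` is a maximal clique of `G`. -/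
def IsMaxClique (G : SimpleGraph V) (K : Finset V) : Prop :=
  G.IsClique (↑K : Set V) ∧
  ∀ K' : Finset V, G.IsClique (↑K' : Set V) → K ⊆ K' → K = K'

/-- `K` is a type-I maximal clique: it shares at least two vertices with some
other maximal clique. -/
def TypeI [DecidableEq V] (G : SimpleGraph V) (K : Finset V) : Prop :=
  IsMaxClique G K ∧
  ∃ K' : Finset V, IsMaxClique G K' ∧ K' ≠ K ∧ 2 ≤ (K ∩ K').card

/-- `K` is a type-II maximal clique: it shares at most one vertex with every
other maximal clique. -/
def TypeII [DecidableEq V] (G : SimpleGraph V) (K : Finset V) : Prop :=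
  IsMaxClique G K ∧
  ∀ K' : Finset V, IsMaxClique G K' → K' ≠ K → (K ∩ K').card ≤ 1

/-- A small (fewer than `3k+2` vertices) type-I maximal clique. -/
def SmallTypeI [DecidableEq V] (G : SimpleGraph V) (k : ℕ) (K : Finset V) : Prop :=
  TypeI G K ∧ K.card < 3 * k + 2

/-- `S(G)`: the union of all small type-I maximal cliques of `G`. -/
def SG [DecidableEq V] (G : SimpleGraph V) (k : ℕ) : Set V :=
  {v | ∃ K : Finset V, SmallTypeI G k K ∧ v ∈ K}

/-- A vulnerable vertex: it is in a small type-I maximal clique, or in a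
type-II maximal clique intersecting a small type-I maximal clique. -/
def Vulnerable [DecidableEq V] (G : SimpleGraph V) (k : ℕ) (v : V) : Prop :=
  (∃ K : Finset V, SmallTypeI G k K ∧ v ∈ K) ∨
  (∃ K1 K2 : Finset V, SmallTypeI G k K1 ∧ TypeII G K2 ∧
    (K1 ∩ K2).Nonempty ∧ v ∈ K2)

set_option linter.unusedSectionVars false

section Infra

variable {G : SimpleGraph V} {Ep Em : Finset (Sym2 V)}

/-- hypotheses bundle -/
structure EditHyp (G : SimpleGraph V) (Ep Em : Finset (Sym2 V)) : Prop where
  hEp : ∀ e ∈ Ep, e ∉ G.edgeSet ∧ ¬ e.IsDiag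
  hEm : ∀ e ∈ Em, e ∈ G.edgeSet

theorem EditHyp.ep_not_em (h : EditHyp G Ep Em) {e : Sym2 V} (he : e ∈ Ep) : e ∉ Em :=
  fun hm => (h.hEp e he).1 (h.hEm e hm)

theorem edited_adj (h : EditHyp G Ep Em) (a b : V) :
    (EditedGraph G Ep Em).Adj a b ↔
      ((G.Adj a b ∧ s(a,b) ∉ Em) ∨ s(a,b) ∈ Ep) := by
  unfold EditedGraph
  rw [SimpleGraph.fromEdgeSet_adj]
  constructor
  · rintro ⟨hmem, hne⟩
    rcases hmem with ⟨hu, hm⟩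
    rcases hu with hg | hp
    · exact Or.inl ⟨hg, hm⟩
    · exact Or.inr hp
  · rintro (⟨hg, hm⟩ | hp)
    · exact ⟨⟨Or.inl hg, hm⟩, hg.ne⟩
    · refine ⟨⟨Or.inr hp, h.ep_not_em hp⟩, ?_⟩
      intro hab
      exact (h.hEp _ hp).2 (by simp [hab])

theorem not_adj_of_em (h : EditHyp G Ep Em) {a b : V} (hm : s(a,b) ∈ Em) :
    ¬ (EditedGraph G Ep Em).Adj a b := by
  rw [edited_adj h]
  rintro (⟨_, hnm⟩ | hp)
  · exact hnm hm
  · exact h.ep_not_em hp hm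

theorem adj_of_ep (h : EditHyp G Ep Em) {a b : V} (hp : s(a,b) ∈ Ep) :
    (EditedGraph G Ep Em).Adj a b := (edited_adj h a b).2 (Or.inr hp)

theorem adj_of_g (h : EditHyp G Ep Em) {a b : V} (hg : G.Adj a b) (hm : s(a,b) ∉ Em) :
    (EditedGraph G Ep Em).Adj a b := (edited_adj h a b).2 (Or.inl ⟨hg, hm⟩)

theorem not_gadj_of_ep (h : EditHyp G Ep Em) {a b : V} (hp : s(a,b) ∈ Ep) :
    ¬ G.Adj a b := fun hg => (h.hEp _ hp).1 (G.mem_edgeSet.2 hg)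

theorem ne_of_ep (h : EditHyp G Ep Em) {a b : V} (hp : s(a,b) ∈ Ep) : a ≠ b := by
  intro hab; exact (h.hEp _ hp).2 (by simp [hab])

theorem gadj_of_em (h : EditHyp G Ep Em) {a b : V} (hm : s(a,b) ∈ Em) : G.Adj a b :=
  G.mem_edgeSet.1 (h.hEm _ hm)

/-- common neighbours of an edge in a diamond-free graph are pairwise adjacent -/
theorem common_adj {H : SimpleGraph V} (hdf : DiamondFree H) {a b c d : V}
    (hab : H.Adj a b) (hac : H.Adj a c) (had : H.Adj a d)
    (hbc : H.Adj b c) (hbd : H.Adj b d) (hcd : c ≠ d) : H.Adj c d := by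
  by_contra hn
  exact hdf a b c d ⟨hab.ne, hac.ne, had.ne, hbc.ne, hbd.ne, hcd,
    hab, hac, had, hbc, hbd, hn⟩

end Infra

section MaxClique

variable [Fintype V] [DecidableEq V] {G : SimpleGraph V}

/-- every clique extends to a maximal clique -/
theorem exists_maxclique (C : Finset V) (hC : G.IsClique (↑C : Set V)) :
    ∃ K : Finset V, IsMaxClique G K ∧ C ⊆ K := by
  classical
  let F : Finset (Finset V) :=
    Finset.univ.powerset.filter (fun K => G.IsClique (↑K : Set V) ∧ C ⊆ K)
  have hCF : C ∈ F := by
    simp only [F, Finset.mem_filter, Finset.mem_powerset]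
    exact ⟨Finset.subset_univ _, hC, Finset.Subset.refl _⟩
  obtain ⟨K, hKF, hmax⟩ := F.exists_max_image Finset.card ⟨C, hCF⟩
  simp only [F, Finset.mem_filter, Finset.mem_powerset] at hKF
  refine ⟨K, ⟨hKF.2.1, ?_⟩, hKF.2.2⟩
  intro K' hK' hsub
  by_contra hne
  have hlt : K.card < K'.card :=
    Finset.card_lt_card (Finset.ssubset_iff_subset_ne.2 ⟨hsub, hne⟩)
  have hK'F : K' ∈ F := by
    simp only [F, Finset.mem_filter, Finset.mem_powerset]
    exact ⟨Finset.subset_univ _, hK', hKF.2.2.trans hsub⟩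
  exact absurd (hmax K' hK'F) (by omega)

theorem maxclique_adj {K : Finset V} (hK : IsMaxClique G K) {a b : V}
    (ha : a ∈ K) (hb : b ∈ K) (hab : a ≠ b) : G.Adj a b :=
  hK.1 (by exact_mod_cast ha) (by exact_mod_cast hb) hab

/-- a vertex adjacent to two distinct vertices of a type-II maximal clique is in it -/
theorem typeII_mem {K : Finset V} (hK : TypeII G K) {a b c : V}
    (ha : a ∈ K) (hb : b ∈ K) (hab : a ≠ b)
    (hca : G.Adj c a) (hcb : G.Adj c b) : c ∈ K := by
  classical
  have hclique : G.IsClique (↑({a, b, c} : Finset V) : Set V) := by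
    intro p hp q hq hpq
    simp only [Finset.coe_insert, Set.mem_insert_iff, Finset.coe_singleton,
      Finset.mem_insert, Finset.mem_singleton] at hp hq
    have hGab : G.Adj a b := maxclique_adj hK.1 ha hb hab
    rcases hp with rfl | rfl | rfl <;> rcases hq with rfl | rfl | rfl <;>
      first
        | exact absurd rfl hpq
        | assumption
        | exact hGab.symm
        | exact hca.symm
        | exact hcb.symm
  obtain ⟨L, hL, hsub⟩ := exists_maxclique _ hclique
  by_cases hLK : L = K
  · subst hLK; exact hsub (by simp)
  · exfalso
    have h2 : 2 ≤ (K ∩ L).card := by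
      have : ({a, b} : Finset V) ⊆ K ∩ L := by
        intro p hp
        simp only [Finset.mem_insert, Finset.mem_singleton] at hp
        rcases hp with rfl | rfl
        · exact Finset.mem_inter.2 ⟨ha, hsub (by simp)⟩
        · exact Finset.mem_inter.2 ⟨hb, hsub (by simp)⟩
      calc 2 = ({a, b} : Finset V).card := (Finset.card_pair hab).symm
        _ ≤ _ := Finset.card_le_card this
    exact absurd (hK.2 L hL hLK) (by omega)

theorem typeI_or_typeII {K : Finset V} (hK : IsMaxClique G K) :
    TypeI G K ∨ TypeII G K := by
  by_cases h : ∃ K' : Finset V, IsMaxClique G K' ∧ K' ≠ K ∧ 2 ≤ (K ∩ K').card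
  · exact Or.inl ⟨hK, h⟩
  · right
    refine ⟨hK, fun K' hK' hne => ?_⟩
    by_contra hc
    exact h ⟨K', hK', hne, by omega⟩

end MaxClique

section Touch

variable [Fintype V] [DecidableEq V]

open Classical in
/-- vertices touched by an edit set -/
noncomputable def touched (E : Finset (Sym2 V)) : Finset V :=
  Finset.univ.filter (fun v => ∃ e ∈ E, v ∈ e)

theorem touched_card (E : Finset (Sym2 V)) : (touched E).card ≤ 2 * E.card := by
  classical
  have hsub : touched E ⊆ E.biUnion (fun e => Finset.univ.filter (fun v => v ∈ e)) := by
    intro v hv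
    simp only [touched, Finset.mem_filter, Finset.mem_univ, true_and] at hv
    obtain ⟨e, he, hve⟩ := hv
    exact Finset.mem_biUnion.2 ⟨e, he, by simp [hve]⟩
  calc (touched E).card ≤ _ := Finset.card_le_card hsub
    _ ≤ ∑ e ∈ E, (Finset.univ.filter (fun v => v ∈ e)).card := Finset.card_biUnion_le
    _ ≤ ∑ _e ∈ E, 2 := by
        refine Finset.sum_le_sum (fun e _ => ?_)
        refine Sym2.ind (fun a b => ?_) e
        have : (Finset.univ.filter (fun v => v ∈ s(a,b))) ⊆ {a, b} := by
          intro v hv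
          simp only [Finset.mem_filter, Sym2.mem_iff] at hv
          simp only [Finset.mem_insert, Finset.mem_singleton]
          tauto
        calc _ ≤ ({a,b} : Finset V).card := Finset.card_le_card this
          _ ≤ 2 := Finset.card_insert_le _ _ |>.trans (by simp)
    _ = 2 * E.card := by rw [Finset.sum_const, smul_eq_mul, mul_comm]

theorem untouched_pair {E : Finset (Sym2 V)} {v : V} (hv : v ∉ touched E)
    {e : Sym2 V} (he : e ∈ E) (hve : v ∈ e) : False := by
  classical
  simp only [touched, Finset.mem_filter, Finset.mem_univ, true_and] at hv
  exact hv ⟨e, he, hve⟩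

end Touch

section Small

variable [Fintype V] [DecidableEq V] {G : SimpleGraph V} {Ep Em : Finset (Sym2 V)} {k : ℕ}

/-- Step 1: a clique containing both ends of a deleted edge is small. -/
theorem clique_small (h : EditHyp G Ep Em) (hdf : DiamondFree (EditedGraph G Ep Em))
    (hk : Ep.card + Em.card ≤ k) {u v : V} (hm : s(u,v) ∈ Em)
    {K : Finset V} (hK : G.IsClique (↑K : Set V)) (hu : u ∈ K) (hv : v ∈ K) :
    K.card < 3 * k + 2 := by
  classical
  by_contra hbig
  push_neg at hbig
  set H := EditedGraph G Ep Em with hH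
  set T : Finset V := touched (Ep ∪ Em) with hT
  have hTcard : T.card ≤ 2 * k := by
    calc T.card ≤ 2 * (Ep ∪ Em).card := touched_card _
      _ ≤ 2 * (Ep.card + Em.card) := by
          have := Finset.card_union_le Ep Em; omega
      _ ≤ 2 * k := by omega
  have hKT : 2 ≤ (K \ T).card := by
    have := Finset.card_le_card_sdiff_add_card (s := K) (t := T)
    omega
  obtain ⟨w1, hw1, w2, hw2, hww⟩ := Finset.one_lt_card.1 hKT
  have hw1K := (Finset.mem_sdiff.1 hw1).1
  have hw1T := (Finset.mem_sdiff.1 hw1).2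
  have hw2K := (Finset.mem_sdiff.1 hw2).1
  have hw2T := (Finset.mem_sdiff.1 hw2).2
  -- untouched vertices keep adjacency
  have hadj : ∀ a b : V, a ∈ K → b ∈ K → a ≠ b → (a ∉ T ∨ b ∉ T) → H.Adj a b := by
    intro a b ha hb hab hnt
    refine adj_of_g h (hK (by exact_mod_cast ha) (by exact_mod_cast hb) hab) ?_
    intro hEm
    rcases hnt with hnt | hnt
    · exact untouched_pair hnt (Finset.mem_union_right _ hEm) (by simp)
    · exact untouched_pair hnt (Finset.mem_union_right _ hEm) (by simp)
  have huv : u ≠ v := by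
    have := gadj_of_em h hm; exact this.ne
  have huT : u ∈ touched (Ep ∪ Em) := by
    classical
    simp only [touched, Finset.mem_filter, Finset.mem_univ, true_and]
    exact ⟨s(u,v), Finset.mem_union_right _ hm, by simp⟩
  have hvT : v ∈ touched (Ep ∪ Em) := by
    classical
    simp only [touched, Finset.mem_filter, Finset.mem_univ, true_and]
    exact ⟨s(u,v), Finset.mem_union_right _ hm, by simp⟩
  have hw1u : w1 ≠ u := fun h' => hw1T (h' ▸ huT)
  have hw1v : w1 ≠ v := fun h' => hw1T (h' ▸ hvT)
  have hw2u : w2 ≠ u := fun h' => hw2T (h' ▸ huT)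
  have hw2v : w2 ≠ v := fun h' => hw2T (h' ▸ hvT)
  exact hdf w1 w2 u v ⟨hww, hw1u, hw1v, hw2u, hw2v, huv,
    hadj w1 w2 hw1K hw2K hww (Or.inl hw1T),
    hadj w1 u hw1K hu hw1u (Or.inl hw1T),
    hadj w1 v hw1K hv hw1v (Or.inl hw1T),
    hadj w2 u hw2K hu hw2u (Or.inl hw2T),
    hadj w2 v hw2K hv hw2v (Or.inl hw2T),
    not_adj_of_em h hm⟩

end Small

section Pairs

variable [DecidableEq V]

theorem double_image (S : Finset (V × V)) (h1 : ∀ p ∈ S, p.1 ≠ p.2)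
    (h2 : ∀ p ∈ S, (p.2, p.1) ∈ S) :
    S.card = 2 * (S.image (fun p => s(p.1, p.2))).card := by
  classical
  rw [Finset.card_eq_sum_card_image (fun p => s(p.1, p.2)) S]
  have hfib : ∀ e ∈ S.image (fun p => s(p.1, p.2)),
      (S.filter (fun a => s(a.1, a.2) = e)).card = 2 := by
    intro e he
    obtain ⟨p0, hp0S, hp0⟩ := Finset.mem_image.1 he
    have hps : (p0.2, p0.1) ∈ S := h2 p0 hp0S
    have hne : p0 ≠ (p0.2, p0.1) := by
      intro hEq
      exact h1 p0 hp0S (by rw [Prod.ext_iff] at hEq; exact hEq.1)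
    have : S.filter (fun a => s(a.1, a.2) = e) = {p0, (p0.2, p0.1)} := by
      apply Finset.ext
      intro q
      simp only [Finset.mem_filter, Finset.mem_insert, Finset.mem_singleton]
      constructor
      · rintro ⟨hqS, hq⟩
        rw [← hp0, Sym2.eq_iff] at hq
        rcases hq with ⟨h1', h2'⟩ | ⟨h1', h2'⟩
        · left; exact Prod.ext h1' h2'
        · right; exact Prod.ext h1' h2'
      · rintro (rfl | rfl)
        · exact ⟨hp0S, hp0⟩
        · refine ⟨hps, ?_⟩
          rw [← hp0]
          exact Sym2.eq_swap
    rw [this, Finset.card_pair hne]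
  rw [Finset.sum_congr rfl hfib, Finset.sum_const, smul_eq_mul, mul_comm]

theorem mem_self_sym2 (a b : V) : a ∈ s(a,b) := by simp

end Pairs

section RuleA

variable [Fintype V] [DecidableEq V] {G : SimpleGraph V} {Ep Em : Finset (Sym2 V)} {k : ℕ}

theorem sym2_eq_of_mem_mem {e : Sym2 V} {a b : V} (hab : a ≠ b)
    (ha : a ∈ e) (hb : b ∈ e) : e = s(a,b) := by
  refine Sym2.ind (fun p q hp hq => ?_) e ha hb
  rw [Sym2.mem_iff] at hp hq
  rcases hp with rfl | rfl <;> rcases hq with rfl | rfl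
  · exact absurd rfl hab
  · rfl
  · exact Sym2.eq_swap
  · exact absurd rfl hab

/-- Step "case 1a": with an added non-edge xy, a G-surviving common `w`,
and a big clique on {x,w}, reduction rule (a) is violated. -/
theorem rule_a_contra (hred : Reduced G k) (h : EditHyp G Ep Em)
    (hdf : DiamondFree (EditedGraph G Ep Em)) (hk : Ep.card + Em.card ≤ k)
    {x y w : V} (hxy : ¬ G.Adj x y) (hxyne : x ≠ y) (hp : s(x,y) ∈ Ep)
    (hgxw : G.Adj x w) (hxwEm : s(x,w) ∉ Em) (hyw : (EditedGraph G Ep Em).Adj y w)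
    {K1 : Finset V} (hK1 : G.IsClique (↑K1 : Set V)) (hxK1 : x ∈ K1) (hwK1 : w ∈ K1)
    (hbig : 3 * k + 2 ≤ K1.card) : False := by
  classical
  set H := EditedGraph G Ep Em with hH
  have hxw : x ≠ w := hgxw.ne
  have hyK1 : y ∉ K1 := by
    intro hy
    exact hxy (hK1 (by exact_mod_cast hxK1) (by exact_mod_cast hy) hxyne)
  have hwy : w ≠ y := fun h' => hyK1 (h' ▸ hwK1)
  set B : Finset V := (K1.erase x).erase w with hB
  have hBcard : B.card = K1.card - 2 := by
    rw [hB, Finset.card_erase_of_mem (Finset.mem_erase.2 ⟨(Ne.symm hxw), hwK1⟩),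
      Finset.card_erase_of_mem hxK1]
    omega
  have hBfacts : ∀ c ∈ B, c ∈ K1 ∧ c ≠ x ∧ c ≠ w ∧ c ≠ y := by
    intro c hc
    rw [hB] at hc
    have h1 := Finset.mem_of_mem_erase hc
    have hcw := (Finset.mem_erase.1 hc).1
    have hcx := (Finset.mem_erase.1 h1).1
    have hcK1 := Finset.mem_of_mem_erase h1
    exact ⟨hcK1, hcx, hcw, fun h' => hyK1 (h' ▸ hcK1)⟩
  set P : V → Prop := fun c => s(c,x) ∉ Em ∧ s(c,w) ∉ Em ∧ s(c,y) ∉ Ep with hP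
  set good : Finset V := B.filter P with hgood
  set bad : Finset V := B.filter (fun c => ¬ P c) with hbad
  have hgb : good.card + bad.card = B.card := B.card_filter_add_card_filter_not P
  -- good vertices are common G-neighbours of x and y
  have hgoodprop : ∀ c ∈ good, G.Adj x c ∧ G.Adj y c := by
    intro c hc
    rw [hgood, Finset.mem_filter] at hc
    obtain ⟨hcB, hP1, hP2, hP3⟩ := hc
    obtain ⟨hcK1, hcx, hcw, hcy⟩ := hBfacts c hcB
    have hXC : H.Adj x c := by
      refine adj_of_g h (hK1 (by exact_mod_cast hxK1) (by exact_mod_cast hcK1) (Ne.symm hcx)) ?_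
      rw [Sym2.eq_swap] at hP1; exact hP1
    have hWC : H.Adj w c := by
      refine adj_of_g h (hK1 (by exact_mod_cast hwK1) (by exact_mod_cast hcK1) (Ne.symm hcw)) ?_
      rw [Sym2.eq_swap] at hP2; exact hP2
    have hXW : H.Adj x w := adj_of_g h hgxw hxwEm
    have hXY : H.Adj x y := adj_of_ep h hp
    have hCY : H.Adj c y := common_adj hdf hXW hXC hXY hWC hyw.symm hcy
    have : (G.Adj c y ∧ s(c,y) ∉ Em) ∨ s(c,y) ∈ Ep := (edited_adj h c y).1 hCY
    rcases this with ⟨hg, _⟩ | hpe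
    · exact ⟨hK1 (by exact_mod_cast hxK1) (by exact_mod_cast hcK1) (Ne.symm hcx), hg.symm⟩
    · exact absurd hpe hP3
  -- bound on bad
  set bad1 : Finset V := B.filter (fun c => s(c,x) ∈ Em) with hbad1
  set bad2 : Finset V := B.filter (fun c => s(c,w) ∈ Em) with hbad2
  set bad3 : Finset V := B.filter (fun c => s(c,y) ∈ Ep) with hbad3
  have hbadsub : bad ⊆ bad1 ∪ bad2 ∪ bad3 := by
    intro c hc
    rw [hbad, Finset.mem_filter] at hc
    obtain ⟨hcB, hnc⟩ := hc
    simp only [Finset.mem_union, hbad1, hbad2, hbad3, Finset.mem_filter]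
    by_cases h1 : s(c,x) ∈ Em
    · exact Or.inl (Or.inl ⟨hcB, h1⟩)
    by_cases h2 : s(c,w) ∈ Em
    · exact Or.inl (Or.inr ⟨hcB, h2⟩)
    · refine Or.inr ⟨hcB, ?_⟩
      by_contra h3
      exact hnc ⟨h1, h2, h3⟩
  set EmX : Finset (Sym2 V) := Em.filter (fun e => x ∈ e) with hEmX
  set EmW : Finset (Sym2 V) := Em.filter (fun e => w ∈ e) with hEmW
  have hbad1card : bad1.card ≤ EmX.card := by
    refine Finset.card_le_card_of_injOn (fun c => s(c,x)) ?_ ?_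
    · intro c hc
      rw [hbad1, Finset.mem_coe, Finset.mem_filter] at hc
      exact Finset.mem_filter.2 ⟨hc.2, by simp⟩
    · intro c hc c' hc' hcc
      have hc1 := Finset.mem_filter.1 (Finset.mem_coe.1 hc)
      have hc2 := Finset.mem_filter.1 (Finset.mem_coe.1 hc')
      obtain ⟨-, hcx, -, -⟩ := hBfacts c hc1.1
      obtain ⟨-, hcx', -, -⟩ := hBfacts c' hc2.1
      simp only [Sym2.eq_iff] at hcc
      tauto
  have hbad2card : bad2.card ≤ EmW.card := by
    refine Finset.card_le_card_of_injOn (fun c => s(c,w)) ?_ ?_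
    · intro c hc
      rw [hbad2, Finset.mem_coe, Finset.mem_filter] at hc
      exact Finset.mem_filter.2 ⟨hc.2, by simp⟩
    · intro c hc c' hc' hcc
      have hc1 := Finset.mem_filter.1 (Finset.mem_coe.1 hc)
      have hc2 := Finset.mem_filter.1 (Finset.mem_coe.1 hc')
      obtain ⟨-, -, hcw, -⟩ := hBfacts c hc1.1
      obtain ⟨-, -, hcw', -⟩ := hBfacts c' hc2.1
      simp only [Sym2.eq_iff] at hcc
      tauto
  have hEmXW : Disjoint EmX EmW := by
    rw [Finset.disjoint_left]
    intro e he1 he2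
    rw [hEmX, Finset.mem_filter] at he1
    rw [hEmW, Finset.mem_filter] at he2
    have : e = s(x,w) := sym2_eq_of_mem_mem hxw he1.2 he2.2
    exact hxwEm (this ▸ he1.1)
  have hEmXWcard : EmX.card + EmW.card ≤ Em.card := by
    rw [← Finset.card_union_of_disjoint hEmXW]
    exact Finset.card_le_card (Finset.union_subset (Finset.filter_subset _ _) (Finset.filter_subset _ _))
  -- two branches on whether w--y is an added pair
  by_cases hwyEp : s(w,y) ∈ Ep
  case pos =>
    set EpY : Finset (Sym2 V) := ((Ep.filter (fun e => y ∈ e)).erase s(x,y)).erase s(w,y) with hEpY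
    have hbad3card : bad3.card ≤ EpY.card := by
      refine Finset.card_le_card_of_injOn (fun c => s(c,y)) ?_ ?_
      · intro c hc
        rw [hbad3, Finset.mem_coe, Finset.mem_filter] at hc
        obtain ⟨-, hcx, hcw, -⟩ := hBfacts c hc.1
        show s(c,y) ∈ _
        rw [hEpY]
        refine Finset.mem_erase.2 ⟨?_, Finset.mem_erase.2 ⟨?_, Finset.mem_filter.2 ⟨hc.2, by simp⟩⟩⟩
        · intro hEq
          simp only [Sym2.eq_iff] at hEq
          rcases hEq with ⟨rfl, -⟩ | ⟨rfl, h'⟩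
          · exact hcw rfl
          · exact hwy h'.symm
        · intro hEq
          simp only [Sym2.eq_iff] at hEq
          rcases hEq with ⟨rfl, -⟩ | ⟨rfl, h'⟩
          · exact hcx rfl
          · exact hxyne h'.symm
      · intro c hc c' hc' hcc
        have hc1 := Finset.mem_filter.1 (Finset.mem_coe.1 hc)
        have hc2 := Finset.mem_filter.1 (Finset.mem_coe.1 hc')
        obtain ⟨-, -, -, hcy⟩ := hBfacts c hc1.1
        obtain ⟨-, -, -, hcy'⟩ := hBfacts c' hc2.1
        simp only [Sym2.eq_iff] at hcc
        tauto
    have hEpYcard : EpY.card ≤ Ep.card - 2 := by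
      have h1 : s(x,y) ∈ Ep.filter (fun e => y ∈ e) := Finset.mem_filter.2 ⟨hp, by simp⟩
      have h2 : s(w,y) ∈ (Ep.filter (fun e => y ∈ e)).erase s(x,y) := by
        refine Finset.mem_erase.2 ⟨?_, Finset.mem_filter.2 ⟨hwyEp, by simp⟩⟩
        intro hEq
        simp only [Sym2.eq_iff] at hEq
        rcases hEq with ⟨h1, -⟩ | ⟨h1, -⟩
        · exact hxw h1.symm
        · exact hwy h1
      rw [hEpY, Finset.card_erase_of_mem h2, Finset.card_erase_of_mem h1]
      have := Finset.card_le_card (Finset.filter_subset (fun e => y ∈ e) Ep)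
      omega
    have hbadcard : bad.card ≤ k - 2 ∧ 2 ≤ k := by
      have hb := Finset.card_le_card hbadsub
      have hbu := Finset.card_union_le (bad1 ∪ bad2) bad3
      have hbu2 := Finset.card_union_le bad1 bad2
      have hep2 : 2 ≤ Ep.card := by
        have : ({s(x,y), s(w,y)} : Finset (Sym2 V)) ⊆ Ep := by
          intro e he
          simp only [Finset.mem_insert, Finset.mem_singleton] at he
          rcases he with rfl | rfl <;> assumption
        have hcne : (s(x,y) : Sym2 V) ≠ s(w,y) := by
          intro hEq
          simp only [Sym2.eq_iff] at hEq
          rcases hEq with ⟨h1, -⟩ | ⟨h1, -⟩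
          · exact hxw h1
          · exact hxyne h1
        calc 2 = ({s(x,y), s(w,y)} : Finset (Sym2 V)).card := (Finset.card_pair hcne).symm
          _ ≤ Ep.card := Finset.card_le_card this
      constructor
      · omega
      · omega
    -- conclude: good has ≥ 2k+2 elements
    have hgoodcard : 2 * k + 2 ≤ good.card := by omega
    -- witness construction
    obtain ⟨S', hS'sub, hS'card⟩ :=
      Finset.exists_subset_card_eq (show (k+1)+(k+1) ≤ good.card by omega)
    have hS'prop : ∀ c ∈ S', G.Adj x c ∧ G.Adj y c ∧ c ∈ K1 :=
      fun c hc => ⟨(hgoodprop c (hS'sub hc)).1, (hgoodprop c (hS'sub hc)).2,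
        (hBfacts c (Finset.mem_of_mem_filter c (hS'sub hc))).1⟩
    have e := S'.equivFinOfCardEq hS'card
    set F : Fin ((k+1)+(k+1)) → V := fun i => ((e.symm i : S') : V) with hF
    have hFinj : Function.Injective F := by
      intro i j hij
      exact e.symm.injective (Subtype.coe_injective hij)
    have hFS : ∀ i, F i ∈ S' := fun i => (e.symm i).2
    refine hred.1 x y hxyne hxy ?_
    refine ⟨fun i => F (finSumFinEquiv (Sum.inl i)), fun i => F (finSumFinEquiv (Sum.inr i)),
      ?_, ?_, ?_⟩
    · have : (Sum.elim (fun i => F (finSumFinEquiv (Sum.inl i)))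
        (fun i => F (finSumFinEquiv (Sum.inr i)))) = F ∘ finSumFinEquiv := by
        funext s; cases s <;> rfl
      rw [this]
      exact hFinj.comp finSumFinEquiv.injective
    · intro i
      obtain ⟨h1, h2, -⟩ := hS'prop _ (hFS (finSumFinEquiv (Sum.inl i)))
      obtain ⟨h3, h4, -⟩ := hS'prop _ (hFS (finSumFinEquiv (Sum.inr i)))
      exact ⟨h1, h2, h3, h4⟩
    · intro i
      obtain ⟨-, -, hK⟩ := hS'prop _ (hFS (finSumFinEquiv (Sum.inl i)))
      obtain ⟨-, -, hK'⟩ := hS'prop _ (hFS (finSumFinEquiv (Sum.inr i)))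
      refine hK1 (by exact_mod_cast hK) (by exact_mod_cast hK') ?_
      intro hEq
      have : finSumFinEquiv (Sum.inl i) = finSumFinEquiv (Sum.inr i) := hFinj hEq
      simpa using finSumFinEquiv.injective this
  case neg =>
    -- w itself is a common neighbour
    have hgyw : G.Adj y w := by
      rcases (edited_adj h y w).1 hyw with ⟨hg, -⟩ | hpe
      · exact hg
      · rw [Sym2.eq_swap] at hpe; exact absurd hpe hwyEp
    set EpY : Finset (Sym2 V) := (Ep.filter (fun e => y ∈ e)).erase s(x,y) with hEpY
    have hbad3card : bad3.card ≤ EpY.card := by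
      refine Finset.card_le_card_of_injOn (fun c => s(c,y)) ?_ ?_
      · intro c hc
        rw [hbad3, Finset.mem_coe, Finset.mem_filter] at hc
        obtain ⟨-, hcx, -, -⟩ := hBfacts c hc.1
        show s(c,y) ∈ _
        rw [hEpY]
        refine Finset.mem_erase.2 ⟨?_, Finset.mem_filter.2 ⟨hc.2, by simp⟩⟩
        intro hEq
        simp only [Sym2.eq_iff] at hEq
        rcases hEq with ⟨rfl, -⟩ | ⟨rfl, h'⟩
        · exact hcx rfl
        · exact hxyne h'.symm
      · intro c hc c' hc' hcc
        have hc1 := Finset.mem_filter.1 (Finset.mem_coe.1 hc)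
        have hc2 := Finset.mem_filter.1 (Finset.mem_coe.1 hc')
        obtain ⟨-, -, -, hcy⟩ := hBfacts c hc1.1
        obtain ⟨-, -, -, hcy'⟩ := hBfacts c' hc2.1
        simp only [Sym2.eq_iff] at hcc
        tauto
    have hEpYcard : EpY.card ≤ Ep.card - 1 := by
      have h1 : s(x,y) ∈ Ep.filter (fun e => y ∈ e) := Finset.mem_filter.2 ⟨hp, by simp⟩
      rw [hEpY, Finset.card_erase_of_mem h1]
      have := Finset.card_le_card (Finset.filter_subset (fun e => y ∈ e) Ep)
      omega
    have hep1 : 1 ≤ Ep.card := Finset.card_pos.2 ⟨_, hp⟩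
    have hbadcard : bad.card ≤ k - 1 ∧ 1 ≤ k := by
      have hb := Finset.card_le_card hbadsub
      have hbu := Finset.card_union_le (bad1 ∪ bad2) bad3
      have hbu2 := Finset.card_union_le bad1 bad2
      omega
    have hgoodcard : 2 * k + 1 ≤ good.card := by omega
    set S : Finset V := insert w good with hS
    have hwgood : w ∉ good := by
      intro hw
      exact ((hBfacts w (Finset.mem_of_mem_filter w hw)).2.2.1) rfl
    have hScard : 2 * k + 2 ≤ S.card := by
      rw [hS, Finset.card_insert_of_notMem hwgood]; omega
    have hSprop : ∀ c ∈ S, G.Adj x c ∧ G.Adj y c ∧ c ∈ K1 := by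
      intro c hc
      rw [hS, Finset.mem_insert] at hc
      rcases hc with rfl | hc
      · exact ⟨hgxw, hgyw, hwK1⟩
      · exact ⟨(hgoodprop c hc).1, (hgoodprop c hc).2,
          (hBfacts c (Finset.mem_of_mem_filter c hc)).1⟩
    obtain ⟨S', hS'sub, hS'card⟩ :=
      Finset.exists_subset_card_eq (show (k+1)+(k+1) ≤ S.card by omega)
    have hS'prop : ∀ c ∈ S', G.Adj x c ∧ G.Adj y c ∧ c ∈ K1 :=
      fun c hc => hSprop c (hS'sub hc)
    have e := S'.equivFinOfCardEq hS'card
    set F : Fin ((k+1)+(k+1)) → V := fun i => ((e.symm i : S') : V) with hF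
    have hFinj : Function.Injective F := by
      intro i j hij
      exact e.symm.injective (Subtype.coe_injective hij)
    have hFS : ∀ i, F i ∈ S' := fun i => (e.symm i).2
    refine hred.1 x y hxyne hxy ?_
    refine ⟨fun i => F (finSumFinEquiv (Sum.inl i)), fun i => F (finSumFinEquiv (Sum.inr i)),
      ?_, ?_, ?_⟩
    · have : (Sum.elim (fun i => F (finSumFinEquiv (Sum.inl i)))
        (fun i => F (finSumFinEquiv (Sum.inr i)))) = F ∘ finSumFinEquiv := by
        funext s; cases s <;> rfl
      rw [this]
      exact hFinj.comp finSumFinEquiv.injective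
    · intro i
      obtain ⟨h1, h2, -⟩ := hS'prop _ (hFS (finSumFinEquiv (Sum.inl i)))
      obtain ⟨h3, h4, -⟩ := hS'prop _ (hFS (finSumFinEquiv (Sum.inr i)))
      exact ⟨h1, h2, h3, h4⟩
    · intro i
      obtain ⟨-, -, hK⟩ := hS'prop _ (hFS (finSumFinEquiv (Sum.inl i)))
      obtain ⟨-, -, hK'⟩ := hS'prop _ (hFS (finSumFinEquiv (Sum.inr i)))
      refine hK1 (by exact_mod_cast hK) (by exact_mod_cast hK') ?_
      intro hEq
      have : finSumFinEquiv (Sum.inl i) = finSumFinEquiv (Sum.inr i) := hFinj hEq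
      simpa using finSumFinEquiv.injective this

end RuleA

section NoEp

variable [Fintype V] [DecidableEq V] {G : SimpleGraph V} {Ep Em : Finset (Sym2 V)} {k : ℕ}

set_option maxHeartbeats 2000000 in
theorem no_ep_at_K (hred : Reduced G k) (h : EditHyp G Ep Em)
    (hdf : DiamondFree (EditedGraph G Ep Em)) (hk : Ep.card + Em.card ≤ k)
    (hmin2 : ∀ Ep' Em' : Finset (Sym2 V),
      (∀ e ∈ Ep', e ∉ G.edgeSet ∧ ¬ e.IsDiag) → (∀ e ∈ Em', e ∈ G.edgeSet) →
      DiamondFree (EditedGraph G Ep' Em') → Ep.card + Em.card ≤ Ep'.card + Em'.card)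
    {K : Finset V} (hKII : TypeII G K)
    (hno : ∀ K', SmallTypeI G k K' → (K ∩ K').Nonempty → False)
    {x y : V} (hxK : x ∈ K) (hp : s(x,y) ∈ Ep) : False := by
  classical
  set H := EditedGraph G Ep Em with hH
  have hnxy : ¬ G.Adj x y := not_gadj_of_ep h hp
  have hxyne : x ≠ y := ne_of_ep h hp
  have hHxy : H.Adj x y := adj_of_ep h hp
  -- the H-clique of the added edge xy
  set W : Finset V := Finset.univ.filter (fun c => H.Adj x c ∧ H.Adj y c) with hW
  set D : Finset V := insert y W with hD
  set Cs : Finset V := insert x D with hCs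
  have hxW : x ∉ W := by
    intro hx; exact H.irrefl (Finset.mem_filter.1 hx).2.1
  have hyW : y ∉ W := by
    intro hy; exact H.irrefl (Finset.mem_filter.1 hy).2.2
  have hxD : x ∉ D := by
    rw [hD, Finset.mem_insert]; push_neg; exact ⟨hxyne, hxW⟩
  have hxCs : x ∈ Cs := Finset.mem_insert_self _ _
  have hDCs : D ⊆ Cs := Finset.subset_insert _ _
  have hyD : y ∈ D := Finset.mem_insert_self _ _
  have hDadjx : ∀ c ∈ D, H.Adj x c := by
    intro c hc
    rw [hD, Finset.mem_insert] at hc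
    rcases hc with rfl | hc
    · exact hHxy
    · exact (Finset.mem_filter.1 hc).2.1
  have hDadjy : ∀ c ∈ D, c ≠ y → H.Adj y c := by
    intro c hc hcy
    rw [hD, Finset.mem_insert] at hc
    rcases hc with rfl | hc
    · exact absurd rfl hcy
    · exact (Finset.mem_filter.1 hc).2.2
  -- L1 : Cs is an H-clique
  have hCsAdj : ∀ a ∈ Cs, ∀ b ∈ Cs, a ≠ b → H.Adj a b := by
    intro a ha b hb hab
    rw [hCs, Finset.mem_insert] at ha hb
    rcases ha with rfl | ha
    · rcases hb with rfl | hb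
      · exact absurd rfl hab
      · exact hDadjx b hb
    · rcases hb with rfl | hb
      · exact (hDadjx a ha).symm
      · -- a, b ∈ D
        rw [hD, Finset.mem_insert] at ha hb
        rcases ha with rfl | ha
        · rcases hb with rfl | hb
          · exact absurd rfl hab
          · exact (Finset.mem_filter.1 hb).2.2
        · rcases hb with rfl | hb
          · exact (Finset.mem_filter.1 ha).2.2.symm
          · have h1 := Finset.mem_filter.1 ha
            have h2 := Finset.mem_filter.1 hb
            exact common_adj hdf hHxy h1.2.1 h2.2.1 h1.2.2 h2.2.2 hab
  have hCsEm : ∀ a ∈ Cs, ∀ b ∈ Cs, a ≠ b → s(a,b) ∉ Em := by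
    intro a ha b hb hab hm
    exact not_adj_of_em h hm (hCsAdj a ha b hb hab)
  -- L2 : common H-neighbours of a Cs-pair lie in Cs
  have hcommon : ∀ a ∈ Cs, ∀ b ∈ Cs, a ≠ b → ∀ e : V, H.Adj a e → H.Adj b e → e ∈ Cs := by
    intro a ha b hb hab e hae hbe
    by_contra heCs
    have hex : e ≠ x := fun hEq => heCs (hEq ▸ hxCs)
    have heD : e ∉ D := fun hEq => heCs (hDCs hEq)
    have hHxe : H.Adj x e := by
      by_cases hax : a = x
      · exact hax ▸ hae
      by_cases hbx : b = x
      · exact hbx ▸ hbe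
      · exact common_adj hdf (hCsAdj a ha b hb hab)
          (hCsAdj a ha x hxCs hax) hae (hCsAdj b hb x hxCs hbx) hbe (Ne.symm hex)
    have hHye : H.Adj y e := by
      have hyCs : y ∈ Cs := hDCs hyD
      have hey : e ≠ y := by
        intro hEq; subst hEq; exact heD hyD
      by_cases hay : a = y
      · exact hay ▸ hae
      by_cases hby : b = y
      · exact hby ▸ hbe
      · exact common_adj hdf (hCsAdj a ha b hb hab)
          (hCsAdj a ha y hyCs hay) hae (hCsAdj b hb y hyCs hby) hbe (Ne.symm hey)
    exact heD (by
      rw [hD, Finset.mem_insert]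
      right
      rw [hW, Finset.mem_filter]
      exact ⟨Finset.mem_univ _, hHxe, hHye⟩)
  -- partition of D into Z (added pairs with x) and WG (surviving G-pairs with x)
  set Z : Finset V := D.filter (fun c => s(x,c) ∈ Ep) with hZ
  set WG : Finset V := D.filter (fun c => s(x,c) ∉ Ep) with hWG
  have hyZ : y ∈ Z := Finset.mem_filter.2 ⟨hyD, hp⟩
  have hZD : Z ⊆ D := Finset.filter_subset _ _
  have hWGD : WG ⊆ D := Finset.filter_subset _ _
  have hZWG : ∀ c, c ∈ Z → c ∉ WG := by
    intro c hc hc'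
    exact (Finset.mem_filter.1 hc').2 (Finset.mem_filter.1 hc).2
  have hWGZ : ∀ c, c ∈ WG → c ∉ Z := by
    intro c hc hc'
    exact (Finset.mem_filter.1 hc).2 (Finset.mem_filter.1 hc').2
  have hDsplit : ∀ c ∈ D, c ∈ Z ∨ c ∈ WG := by
    intro c hc
    by_cases hcc : s(x,c) ∈ Ep
    · exact Or.inl (Finset.mem_filter.2 ⟨hc, hcc⟩)
    · exact Or.inr (Finset.mem_filter.2 ⟨hc, hcc⟩)
  have hxWG : x ∉ WG := fun hx => hxD (hWGD hx)
  have hxZ : x ∉ Z := fun hx => hxD (hZD hx)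
  have hZprop : ∀ c ∈ Z, ¬ G.Adj x c ∧ x ≠ c := by
    intro c hc
    have := (Finset.mem_filter.1 hc).2
    exact ⟨not_gadj_of_ep h this, ne_of_ep h this⟩
  have hWGprop : ∀ w ∈ WG, G.Adj x w ∧ s(x,w) ∉ Em := by
    intro w hw
    have hwD := hWGD hw
    have hnp := (Finset.mem_filter.1 hw).2
    rcases (edited_adj h x w).1 (hDadjx w hwD) with ⟨hg, hm⟩ | hpe
    · exact ⟨hg, hm⟩
    · exact absurd hpe hnp
  have hWGy : ∀ w ∈ WG, w ≠ y := by
    intro w hw hEq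
    exact hZWG y hyZ (hEq ▸ hw)
  -- ============ swap 1 : disconnect x from D, giving z ≤ Σ ============
  set z : ℕ := Z.card with hzdef
  set Sg : ℕ := WG.card with hSgdef
  have hzS : z ≤ Sg := by
    set Ep1 : Finset (Sym2 V) := Ep \ Z.image (fun c => s(x,c)) with hEp1
    set Em1 : Finset (Sym2 V) := Em ∪ WG.image (fun c => s(x,c)) with hEm1
    have hZim : Z.image (fun c => s(x,c)) ⊆ Ep := by
      intro e he
      obtain ⟨c, hc, rfl⟩ := Finset.mem_image.1 he
      exact (Finset.mem_filter.1 hc).2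
    have hZiminj : Set.InjOn (fun c => s(x,c)) Z := by
      intro c hc c' hc' hcc
      simp only [Sym2.eq_iff] at hcc
      rcases hcc with ⟨-, h2⟩ | ⟨h1, h2⟩
      · exact h2
      · exact absurd h2.symm (hZprop c (Finset.mem_coe.1 hc)).2
    have hZimcard : (Z.image (fun c => s(x,c))).card = z := by
      rw [Finset.card_image_of_injOn hZiminj]
    have hWGim : Disjoint (WG.image (fun c => s(x,c))) Em := by
      rw [Finset.disjoint_left]
      intro e he hm
      obtain ⟨c, hc, rfl⟩ := Finset.mem_image.1 he
      exact (hWGprop c hc).2 hm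
    have hWGiminj : Set.InjOn (fun c => s(x,c)) WG := by
      intro c hc c' hc' hcc
      simp only [Sym2.eq_iff] at hcc
      rcases hcc with ⟨-, h2⟩ | ⟨h1, h2⟩
      · exact h2
      · exact absurd h2.symm (hWGprop c (Finset.mem_coe.1 hc)).1.ne
    have hWGimcard : (WG.image (fun c => s(x,c))).card = Sg := by
      rw [Finset.card_image_of_injOn hWGiminj]
    have h1hyp : EditHyp G Ep1 Em1 := by
      constructor
      · intro e he
        exact h.hEp e (Finset.mem_sdiff.1 he).1
      · intro e he
        rcases Finset.mem_union.1 he with he | he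
        · exact h.hEm e he
        · obtain ⟨c, hc, rfl⟩ := Finset.mem_image.1 he
          exact G.mem_edgeSet.2 (hWGprop c hc).1
    set H1 := EditedGraph G Ep1 Em1 with hH1
    have hunch : ∀ a b : V, (∀ c ∈ D, s(a,b) ≠ s(x,c)) → (H1.Adj a b ↔ H.Adj a b) := by
      intro a b hnk
      rw [edited_adj h1hyp, edited_adj h]
      have he1 : s(a,b) ∈ Ep1 ↔ s(a,b) ∈ Ep := by
        rw [hEp1, Finset.mem_sdiff]
        constructor
        · exact fun h' => h'.1
        · intro h'
          refine ⟨h', ?_⟩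
          intro hin
          obtain ⟨c, hc, hcc⟩ := Finset.mem_image.1 hin
          exact hnk c (hZD hc) hcc.symm
      have he2 : s(a,b) ∈ Em1 ↔ s(a,b) ∈ Em := by
        rw [hEm1, Finset.mem_union]
        constructor
        · rintro (h' | h')
          · exact h'
          · obtain ⟨c, hc, hcc⟩ := Finset.mem_image.1 h'
            exact absurd hcc.symm (hnk c (hWGD hc))
        · exact Or.inl
      rw [he1, he2]
    have hH1x : ∀ c ∈ D, ¬ H1.Adj x c := by
      intro c hc hadj
      rcases hDsplit c hc with hcZ | hcWG
      · rcases (edited_adj h1hyp x c).1 hadj with ⟨hg, -⟩ | hpe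
        · exact (hZprop c hcZ).1 hg
        · rw [hEp1, Finset.mem_sdiff] at hpe
          exact hpe.2 (Finset.mem_image.2 ⟨c, hcZ, rfl⟩)
      · exact not_adj_of_em h1hyp
          (Finset.mem_union_right _ (Finset.mem_image.2 ⟨c, hcWG, rfl⟩)) hadj
    have htoH : ∀ p q : V, p ≠ x → q ≠ x → (H1.Adj p q ↔ H.Adj p q) := by
      intro p q hpx hqx
      refine hunch p q ?_
      intro c hc hEq
      simp only [Sym2.eq_iff] at hEq
      rcases hEq with ⟨h1', -⟩ | ⟨-, h2'⟩
      · exact hpx h1'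
      · exact hqx h2'
    have htoHx : ∀ q : V, H1.Adj x q → H.Adj x q ∧ q ∉ D := by
      intro q hq
      have hqD : q ∉ D := fun hqD => hH1x q hqD hq
      have : H1.Adj x q ↔ H.Adj x q := by
        refine hunch x q ?_
        intro c hc hEq
        simp only [Sym2.eq_iff] at hEq
        rcases hEq with ⟨-, h2'⟩ | ⟨h1', -⟩
        · exact hqD (h2' ▸ hc)
        · exact hxD (h1' ▸ hc)
      exact ⟨this.1 hq, hqD⟩
    have hdf1 : DiamondFree H1 := by
      intro a b c d hdia
      obtain ⟨nab, nac, nad, nbc, nbd, ncd, Aab, Aac, Aad, Abc, Abd, Ncd⟩ := hdia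
      by_cases hax : a = x
      · subst hax
        obtain ⟨h1, -⟩ := htoHx b Aab
        obtain ⟨h2, -⟩ := htoHx c Aac
        obtain ⟨h3, -⟩ := htoHx d Aad
        have h4 := (htoH b c (Ne.symm nab) (Ne.symm nac)).1 Abc
        have h5 := (htoH b d (Ne.symm nab) (Ne.symm nad)).1 Abd
        have h6 : ¬ H.Adj c d := fun hcd =>
          Ncd ((htoH c d (Ne.symm nac) (Ne.symm nad)).2 hcd)
        exact hdf a b c d ⟨nab, nac, nad, nbc, nbd, ncd, h1, h2, h3, h4, h5, h6⟩
      by_cases hbx : b = x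
      · subst hbx
        obtain ⟨h1, -⟩ := htoHx a Aab.symm
        obtain ⟨h2, -⟩ := htoHx c Abc
        obtain ⟨h3, -⟩ := htoHx d Abd
        have h4 := (htoH a c hax (Ne.symm nbc)).1 Aac
        have h5 := (htoH a d hax (Ne.symm nbd)).1 Aad
        have h6 : ¬ H.Adj c d := fun hcd =>
          Ncd ((htoH c d (Ne.symm nbc) (Ne.symm nbd)).2 hcd)
        exact hdf b a c d ⟨(Ne.symm nab), nbc, nbd, nac, nad, ncd, h1, h2, h3, h4, h5, h6⟩
      by_cases hcx : c = x
      · subst hcx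
        obtain ⟨h1, haD⟩ := htoHx a Aac.symm
        obtain ⟨h2, hbD⟩ := htoHx b Abc.symm
        have h3 := (htoH a b hax hbx).1 Aab
        have h4 := (htoH a d hax (Ne.symm ncd)).1 Aad
        have h5 := (htoH b d hbx (Ne.symm ncd)).1 Abd
        by_cases hdD : d ∈ D
        · -- use L2 : a is a common H-neighbour of c(=x) and d, so a ∈ Cs, contra
          have haCs : a ∈ Cs := hcommon c hxCs d (hDCs hdD) ncd a h1 h4.symm
          rw [hCs, Finset.mem_insert] at haCs
          rcases haCs with rfl | haCs
          · exact hax rfl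
          · exact haD haCs
        · have h6 : ¬ H.Adj c d := by
            intro hxd
            have : H1.Adj c d ↔ H.Adj c d := by
              refine hunch c d ?_
              intro c' hc' hEq
              simp only [Sym2.eq_iff] at hEq
              rcases hEq with ⟨-, h2'⟩ | ⟨h1', -⟩
              · exact hdD (h2' ▸ hc')
              · exact hxD (h1' ▸ hc')
            exact Ncd (this.2 hxd)
          exact hdf a b c d ⟨nab, nac, nad, nbc, nbd, ncd, h3, h1.symm, h4, h2.symm, h5, h6⟩
      by_cases hdx : d = x
      · subst hdx
        obtain ⟨h1, haD⟩ := htoHx a Aad.symm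
        obtain ⟨h2, hbD⟩ := htoHx b Abd.symm
        have h3 := (htoH a b hax hbx).1 Aab
        have h4 := (htoH a c hax hcx).1 Aac
        have h5 := (htoH b c hbx hcx).1 Abc
        by_cases hcD : c ∈ D
        · have haCs : a ∈ Cs := hcommon d hxCs c (hDCs hcD) (Ne.symm ncd) a h1 h4.symm
          rw [hCs, Finset.mem_insert] at haCs
          rcases haCs with rfl | haCs
          · exact hax rfl
          · exact haD haCs
        · have h6 : ¬ H.Adj c d := by
            intro hxd
            have : H1.Adj d c ↔ H.Adj d c := by
              refine hunch d c ?_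
              intro c' hc' hEq
              simp only [Sym2.eq_iff] at hEq
              rcases hEq with ⟨-, h2'⟩ | ⟨h1', -⟩
              · exact hcD (h2' ▸ hc')
              · exact hxD (h1' ▸ hc')
            exact Ncd ((this.2 hxd.symm).symm)
          exact hdf a b c d ⟨nab, nac, nad, nbc, nbd, ncd, h3, h4, h1.symm, h5, h2.symm, h6⟩
      · -- x not among the four vertices
        have h1 := (htoH a b hax hbx).1 Aab
        have h2 := (htoH a c hax hcx).1 Aac
        have h3 := (htoH a d hax hdx).1 Aad
        have h4 := (htoH b c hbx hcx).1 Abc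
        have h5 := (htoH b d hbx hdx).1 Abd
        have h6 : ¬ H.Adj c d := fun hcd => Ncd ((htoH c d hcx hdx).2 hcd)
        exact hdf a b c d ⟨nab, nac, nad, nbc, nbd, ncd, h1, h2, h3, h4, h5, h6⟩
    have hcard1 : Ep1.card = Ep.card - z := by
      rw [hEp1, Finset.card_sdiff_of_subset hZim, hZimcard]
    have hcard2 : Em1.card = Em.card + Sg := by
      rw [hEm1, Finset.card_union_of_disjoint hWGim.symm, hWGimcard]
    have := hmin2 Ep1 Em1 h1hyp.hEp h1hyp.hEm hdf1
    rw [hcard1, hcard2] at this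
    have hzEp : z ≤ Ep.card := by
      rw [← hZimcard]; exact Finset.card_le_card hZim
    omega
  have hz1 : 1 ≤ z := Finset.card_pos.2 ⟨y, hyZ⟩
  -- ============ petals ============
  have hxwadj : ∀ w ∈ WG, G.Adj x w := fun w hw => (hWGprop w hw).1
  have hmaxc : ∀ w ∈ WG, ∀ L : Finset V, IsMaxClique G L → x ∈ L → w ∈ L →
      L.card < 3*k+2 ∧ TypeII G L := by
    intro w hw L hL hxL hwL
    have hsmall : L.card < 3*k+2 := by
      by_contra hbig
      push_neg at hbig
      exact rule_a_contra hred h hdf hk hnxy hxyne hp (hxwadj w hw) (hWGprop w hw).2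
        (hDadjy w (hWGD hw) (hWGy w hw)) hL.1 hxL hwL hbig
    refine ⟨hsmall, ?_⟩
    rcases typeI_or_typeII hL with hI | hII
    · exact absurd (hno L ⟨hI, hsmall⟩ ⟨x, Finset.mem_inter.2 ⟨hxK, hxL⟩⟩) not_false
    · exact hII
  have huniq : ∀ w ∈ WG, ∀ L L' : Finset V,
      IsMaxClique G L → x ∈ L → w ∈ L → IsMaxClique G L' → x ∈ L' → w ∈ L' → L = L' := by
    intro w hw L L' hL hxL hwL hL' hxL' hwL'
    by_contra hne
    have h2 : 2 ≤ (L ∩ L').card := by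
      have hsub : ({x, w} : Finset V) ⊆ L ∩ L' := by
        intro p hp
        simp only [Finset.mem_insert, Finset.mem_singleton] at hp
        rcases hp with rfl | rfl
        · exact Finset.mem_inter.2 ⟨hxL, hxL'⟩
        · exact Finset.mem_inter.2 ⟨hwL, hwL'⟩
      calc 2 = ({x,w} : Finset V).card := (Finset.card_pair (hxwadj w hw).ne).symm
        _ ≤ _ := Finset.card_le_card hsub
    have hII := (hmaxc w hw L hL hxL hwL).2
    exact absurd (hII.2 L' hL' (fun hEq => hne hEq.symm)) (by omega)
  have hex : ∀ w : V, ∃ L : Finset V, w ∈ WG → (IsMaxClique G L ∧ x ∈ L ∧ w ∈ L) := by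
    intro w
    by_cases hw : w ∈ WG
    · have hcl : G.IsClique (↑({x, w} : Finset V) : Set V) := by
        intro p hp q hq hpq
        simp only [Finset.coe_insert, Set.mem_insert_iff, Finset.coe_singleton,
          Set.mem_singleton_iff] at hp hq
        rcases hp with h1 | h1 <;> rcases hq with h2 | h2
        · exact absurd (h1.trans h2.symm) hpq
        · rw [h1, h2]; exact hxwadj w hw
        · rw [h1, h2]; exact (hxwadj w hw).symm
        · exact absurd (h1.trans h2.symm) hpq
      obtain ⟨L, hL, hsub⟩ := exists_maxclique _ hcl
      exact ⟨L, fun _ => ⟨hL, hsub (by simp), hsub (by simp)⟩⟩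
    · exact ⟨∅, fun h' => absurd h' hw⟩
  choose κ hκ using hex
  have hκmax : ∀ w ∈ WG, IsMaxClique G (κ w) := fun w hw => (hκ w hw).1
  have hκx : ∀ w ∈ WG, x ∈ κ w := fun w hw => (hκ w hw).2.1
  have hκw : ∀ w ∈ WG, w ∈ κ w := fun w hw => (hκ w hw).2.2
  have hP2a : ∀ w ∈ WG, ∀ w' ∈ WG, w ≠ w' → G.Adj w w' → κ w = κ w' := by
    intro w hw w' hw' hne hadj
    have hwκ : w' ∈ κ w := typeII_mem (hmaxc w hw (κ w) (hκmax w hw) (hκx w hw) (hκw w hw)).2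
      (hκx w hw) (hκw w hw) (hxwadj w hw).ne (hxwadj w' hw').symm hadj.symm
    exact huniq w' hw' (κ w) (κ w') (hκmax w hw) (hκx w hw) hwκ
      (hκmax w' hw') (hκx w' hw') (hκw w' hw')
  have hP2b : ∀ w ∈ WG, ∀ w' ∈ WG, w ≠ w' → κ w = κ w' → G.Adj w w' :=
    fun w hw w' hw' hne hEq =>
      maxclique_adj (hκmax w hw) (hκw w hw) (hEq ▸ hκw w' hw') hne
  have hP3 : ∀ ζ ∈ Z, ∀ w ∈ WG, ∀ w' ∈ WG, w ≠ w' → κ w = κ w' →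
      G.Adj ζ w → G.Adj ζ w' → False := by
    intro ζ hζ w hw w' hw' hne hEq h1 h2
    have hζκ : ζ ∈ κ w := typeII_mem (hmaxc w hw (κ w) (hκmax w hw) (hκx w hw) (hκw w hw)).2
      (hκw w hw) (hEq ▸ hκw w' hw') hne h1 h2
    have hxζ : G.Adj x ζ := maxclique_adj (hκmax w hw) (hκx w hw) hζκ (hZprop ζ hζ).2
    exact (hZprop ζ hζ).1 hxζ
  -- ============ the final exchange ============
  set EpC : Finset (Sym2 V) := Ep.filter (fun e => ∀ v ∈ e, v ∈ Cs) with hEpC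
  set ZOG : Finset (V × V) :=
    Z.offDiag.filter (fun p => G.Adj p.1 p.2 ∧ s(p.1,p.2) ∉ Em) with hZOGdef
  set ZZG : Finset (Sym2 V) := ZOG.image (fun p => s(p.1,p.2)) with hZZGdef
  set Ep2 : Finset (Sym2 V) := Ep \ EpC with hEp2
  set Em2 : Finset (Sym2 V) := Em ∪ ZZG with hEm2
  set A : ℕ := EpC.card with hA
  set tZ : ℕ := ZZG.card with htZ
  have hZCs : Z ⊆ Cs := fun c hc => hDCs (hZD hc)
  have hWGCs : WG ⊆ Cs := fun c hc => hDCs (hWGD hc)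
  have hinCs : ∀ a b : V, (∀ v ∈ s(a,b), v ∈ Cs) ↔ (a ∈ Cs ∧ b ∈ Cs) := by
    intro a b
    constructor
    · intro h'
      exact ⟨h' a (by simp), h' b (by simp)⟩
    · rintro ⟨h1, h2⟩ v hv
      rcases Sym2.mem_iff.1 hv with rfl | rfl
      · exact h1
      · exact h2
  have hZZGmem : ∀ e ∈ ZZG, ∃ p q : V, p ∈ Z ∧ q ∈ Z ∧ p ≠ q ∧ G.Adj p q ∧
      s(p,q) ∉ Em ∧ e = s(p,q) := by
    intro e he
    obtain ⟨p, hp, rfl⟩ := Finset.mem_image.1 he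
    have h1 := Finset.mem_filter.1 hp
    have h2 := Finset.mem_offDiag.1 h1.1
    exact ⟨p.1, p.2, h2.1, h2.2.1, h2.2.2, h1.2.1, h1.2.2, rfl⟩
  have hZZGEm : Disjoint ZZG Em := by
    rw [Finset.disjoint_left]
    intro e he hm
    obtain ⟨p, q, -, -, -, -, hnm, rfl⟩ := hZZGmem e he
    exact hnm hm
  have h2hyp : EditHyp G Ep2 Em2 := by
    constructor
    · intro e he
      exact h.hEp e (Finset.mem_sdiff.1 he).1
    · intro e he
      rcases Finset.mem_union.1 he with he | he
      · exact h.hEm e he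
      · obtain ⟨p, q, -, -, -, hg, -, rfl⟩ := hZZGmem e he
        exact G.mem_edgeSet.2 hg
  set H2 := EditedGraph G Ep2 Em2 with hH2
  -- Γ′-adjacency inside Cs
  set Gam : V → V → Prop :=
    fun a b => G.Adj a b ∧ s(a,b) ∉ Em ∧ ¬(a ∈ Z ∧ b ∈ Z) with hGam
  have hGamSymm : ∀ a b, Gam a b → Gam b a := by
    intro a b hg
    obtain ⟨h1, h2, h3⟩ := hg
    refine ⟨h1.symm, ?_, fun hu => h3 ⟨hu.2, hu.1⟩⟩
    rw [Sym2.eq_swap]; exact h2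
  have hH2in : ∀ a ∈ Cs, ∀ b ∈ Cs, (H2.Adj a b ↔ Gam a b) := by
    intro a ha b hb
    constructor
    · intro hadj
      rcases (edited_adj h2hyp a b).1 hadj with ⟨hg, hm2⟩ | hpe
      · have hmem : s(a,b) ∉ Em := fun hm => hm2 (Finset.mem_union_left _ hm)
        refine ⟨hg, hmem, ?_⟩
        rintro ⟨haZ, hbZ⟩
        have : s(a,b) ∈ ZZG := by
          refine Finset.mem_image.2 ⟨(a, b), ?_, rfl⟩
          exact Finset.mem_filter.2 ⟨Finset.mem_offDiag.2 ⟨haZ, hbZ, hg.ne⟩, hg, hmem⟩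
        exact hm2 (Finset.mem_union_right _ this)
      · rw [hEp2, Finset.mem_sdiff] at hpe
        exact absurd (Finset.mem_filter.2 ⟨hpe.1, (hinCs a b).2 ⟨ha, hb⟩⟩) hpe.2
    · rintro ⟨hg, hm, hz⟩
      refine (edited_adj h2hyp a b).2 (Or.inl ⟨hg, ?_⟩)
      intro hmem
      rcases Finset.mem_union.1 hmem with h' | h'
      · exact hm h'
      · obtain ⟨p, q, hpZ, hqZ, -, -, -, hEq⟩ := hZZGmem _ h'
        rw [Sym2.eq_iff] at hEq
        rcases hEq with ⟨rfl, rfl⟩ | ⟨rfl, rfl⟩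
        · exact hz ⟨hpZ, hqZ⟩
        · exact hz ⟨hqZ, hpZ⟩
  have hH2out : ∀ a b : V, ¬(a ∈ Cs ∧ b ∈ Cs) → (H2.Adj a b ↔ H.Adj a b) := by
    intro a b hnot
    rw [edited_adj h2hyp, edited_adj h]
    have he1 : s(a,b) ∈ Ep2 ↔ s(a,b) ∈ Ep := by
      rw [hEp2, Finset.mem_sdiff]
      constructor
      · exact fun h' => h'.1
      · intro h'
        refine ⟨h', fun hin => ?_⟩
        exact hnot ((hinCs a b).1 (Finset.mem_filter.1 hin).2)
    have he2 : s(a,b) ∈ Em2 ↔ s(a,b) ∈ Em := by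
      rw [hEm2, Finset.mem_union]
      constructor
      · rintro (h' | h')
        · exact h'
        · obtain ⟨p, q, hpZ, hqZ, -, -, -, hEq⟩ := hZZGmem _ h'
          rw [Sym2.eq_iff] at hEq
          rcases hEq with ⟨rfl, rfl⟩ | ⟨rfl, rfl⟩
          · exact absurd ⟨hZCs hpZ, hZCs hqZ⟩ hnot
          · exact absurd ⟨hZCs hqZ, hZCs hpZ⟩ hnot
      · exact Or.inl
    rw [he1, he2]
  -- structural facts about Γ′
  have hdich : ∀ p ∈ Cs, p = x ∨ p ∈ WG ∨ p ∈ Z := by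
    intro p hpc
    rw [hCs, Finset.mem_insert] at hpc
    rcases hpc with rfl | hpD
    · exact Or.inl rfl
    · rcases hDsplit p hpD with h' | h'
      · exact Or.inr (Or.inr h')
      · exact Or.inr (Or.inl h')
  have hGxw : ∀ p ∈ Cs, Gam x p → p ∈ WG := by
    intro p hpc hg
    rcases hdich p hpc with rfl | hpW | hpZ
    · exact absurd hg.1 (G.irrefl)
    · exact hpW
    · exact absurd hg.1 (hZprop p hpZ).1
  have hZnx : ∀ p ∈ Z, ∀ q, Gam p q → q ≠ x := by
    intro p hp q hg hEq
    subst hEq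
    exact (hZprop p hp).1 hg.1.symm
  have hGww : ∀ w ∈ WG, ∀ w' ∈ WG, Gam w w' → κ w = κ w' :=
    fun w hw w' hw' hg => hP2a w hw w' hw' hg.1.ne hg.1
  have hGwwE : ∀ w ∈ WG, ∀ w' ∈ WG, w ≠ w' → κ w = κ w' → Gam w w' := by
    intro w hw w' hw' hne hEq
    exact ⟨hP2b w hw w' hw' hne hEq, hCsEm w (hWGCs hw) w' (hWGCs hw') hne,
      fun hu => hWGZ w hw hu.1⟩
  have hGxwE : ∀ w ∈ WG, Gam x w := by
    intro w hw
    exact ⟨hxwadj w hw, (hWGprop w hw).2, fun hu => hxZ hu.1⟩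
  have hGamZZ : ∀ p ∈ Z, ∀ q ∈ Z, Gam p q → False :=
    fun p hp q hq hg => hg.2.2 ⟨hp, hq⟩
  -- Γ′ has no diamond inside Cs
  have hGDF : ∀ a b c d : V, a ∈ Cs → b ∈ Cs → c ∈ Cs → d ∈ Cs → c ≠ d →
      Gam a b → Gam a c → Gam a d → Gam b c → Gam b d → Gam c d := by
    intro a b c d ha hb hc hd hcd gab gac gad gbc gbd
    rcases hdich a ha with hax | haW | haZ
    · -- a = x
      have hbW : b ∈ WG := hGxw b hb (hax ▸ gab)
      have hcW : c ∈ WG := hGxw c hc (hax ▸ gac)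
      have hdW : d ∈ WG := hGxw d hd (hax ▸ gad)
      exact hGwwE c hcW d hdW hcd
        ((hGww b hbW c hcW gbc).symm.trans (hGww b hbW d hdW gbd))
    · -- a ∈ WG
      rcases hdich b hb with hbx | hbW | hbZ
      · -- b = x
        have hcW : c ∈ WG := hGxw c hc (hbx ▸ gbc)
        have hdW : d ∈ WG := hGxw d hd (hbx ▸ gbd)
        exact hGwwE c hcW d hdW hcd
          ((hGww a haW c hcW gac).symm.trans (hGww a haW d hdW gad))
      · -- a,b ∈ WG
        have hκab := hGww a haW b hbW gab
        rcases hdich c hc with hcx | hcW | hcZ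
        · rcases hdich d hd with hdx | hdW | hdZ
          · exact absurd (hcx.trans hdx.symm) hcd
          · rw [hcx]; exact hGxwE d hdW
          · exact (hP3 d hdZ a haW b hbW gab.1.ne hκab gad.1.symm gbd.1.symm).elim
        · rcases hdich d hd with hdx | hdW | hdZ
          · rw [hdx]; exact hGamSymm x c (hGxwE c hcW)
          · exact hGwwE c hcW d hdW hcd
              ((hGww a haW c hcW gac).symm.trans (hGww a haW d hdW gad))
          · exact (hP3 d hdZ a haW b hbW gab.1.ne hκab gad.1.symm gbd.1.symm).elim
        · exact (hP3 c hcZ a haW b hbW gab.1.ne hκab gac.1.symm gbc.1.symm).elim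
      · -- a ∈ WG, b ∈ Z
        rcases hdich c hc with hcx | hcW | hcZ
        · exact (hZnx b hbZ c gbc hcx).elim
        · rcases hdich d hd with hdx | hdW | hdZ
          · exact (hZnx b hbZ d gbd hdx).elim
          · exact hGwwE c hcW d hdW hcd
              ((hGww a haW c hcW gac).symm.trans (hGww a haW d hdW gad))
          · exact (hGamZZ b hbZ d hdZ gbd).elim
        · exact (hGamZZ b hbZ c hcZ gbc).elim
    · -- a ∈ Z
      rcases hdich b hb with hbx | hbW | hbZ
      · exact (hZnx a haZ b gab hbx).elim
      · rcases hdich c hc with hcx | hcW | hcZ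
        · exact (hZnx a haZ c gac hcx).elim
        · rcases hdich d hd with hdx | hdW | hdZ
          · exact (hZnx a haZ d gad hdx).elim
          · exact hGwwE c hcW d hdW hcd
              ((hGww b hbW c hcW gbc).symm.trans (hGww b hbW d hdW gbd))
          · exact (hGamZZ a haZ d hdZ gad).elim
        · exact (hGamZZ a haZ c hcZ gac).elim
      · exact (hGamZZ a haZ b hbZ gab).elim
  -- H2 is diamond-free
  have hdf2 : DiamondFree H2 := by
    intro a b c d hdia
    obtain ⟨nab, nac, nad, nbc, nbd, ncd, Aab, Aac, Aad, Abc, Abd, Ncd⟩ := hdia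
    by_cases hcdCs : c ∈ Cs ∧ d ∈ Cs
    · -- the missing pair is inside Cs; apexes must be in Cs too
      have haCs : a ∈ Cs := by
        by_contra haCs
        have h1 : H.Adj a c := (hH2out a c (fun hpr => haCs hpr.1)).1 Aac
        have h2 : H.Adj a d := (hH2out a d (fun hpr => haCs hpr.1)).1 Aad
        exact haCs (hcommon c hcdCs.1 d hcdCs.2 ncd a h1.symm h2.symm)
      have hbCs : b ∈ Cs := by
        by_contra hbCs
        have h1 : H.Adj b c := (hH2out b c (fun hpr => hbCs hpr.1)).1 Abc
        have h2 : H.Adj b d := (hH2out b d (fun hpr => hbCs hpr.1)).1 Abd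
        exact hbCs (hcommon c hcdCs.1 d hcdCs.2 ncd b h1.symm h2.symm)
      have gab := (hH2in a haCs b hbCs).1 Aab
      have gac := (hH2in a haCs c hcdCs.1).1 Aac
      have gad := (hH2in a haCs d hcdCs.2).1 Aad
      have gbc := (hH2in b hbCs c hcdCs.1).1 Abc
      have gbd := (hH2in b hbCs d hcdCs.2).1 Abd
      exact Ncd ((hH2in c hcdCs.1 d hcdCs.2).2
        (hGDF a b c d haCs hbCs hcdCs.1 hcdCs.2 ncd gab gac gad gbc gbd))
    · -- missing pair not inside Cs : we get an H-diamond
      have toH : ∀ p q : V, H2.Adj p q → H.Adj p q := by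
        intro p q hpq
        by_cases hpqCs : p ∈ Cs ∧ q ∈ Cs
        · have hg := (hH2in p hpqCs.1 q hpqCs.2).1 hpq
          exact adj_of_g h hg.1 hg.2.1
        · exact (hH2out p q hpqCs).1 hpq
      have h6 : ¬ H.Adj c d := fun h' => Ncd ((hH2out c d hcdCs).2 h')
      exact hdf a b c d ⟨nab, nac, nad, nbc, nbd, ncd, toH a b Aab, toH a c Aac,
        toH a d Aad, toH b c Abc, toH b d Abd, h6⟩
  -- minimality gives A ≤ tZ
  have hEpCsub : EpC ⊆ Ep := Finset.filter_subset _ _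
  have hAEp : A ≤ Ep.card := Finset.card_le_card hEpCsub
  have hAtZ : A ≤ tZ := by
    have hc1 : Ep2.card = Ep.card - A := by
      rw [hEp2, Finset.card_sdiff_of_subset hEpCsub]
    have hc2 : Em2.card = Em.card + tZ := by
      rw [hEm2, Finset.card_union_of_disjoint hZZGEm.symm]
    have := hmin2 Ep2 Em2 h2hyp.hEp h2hyp.hEm hdf2
    rw [hc1, hc2] at this
    omega
  -- ============ the counting contradiction ============\n  -- injection of x–Z pairs into EpC
  have hinjxZ : Set.InjOn (fun c => s(x,c)) Z := by
    intro c hc c' hc' hcc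
    simp only [Sym2.eq_iff] at hcc
    rcases hcc with ⟨-, h2⟩ | ⟨h1, h2⟩
    · exact h2
    · exact absurd h2.symm (hZprop c (Finset.mem_coe.1 hc)).2
  set F1 : Finset (Sym2 V) := EpC.filter (fun e => x ∈ e) with hF1
  set F2 : Finset (Sym2 V) := EpC.filter (fun e => x ∉ e ∧ ∀ v ∈ e, v ∈ WG) with hF2
  set F3 : Finset (Sym2 V) := EpC.filter
    (fun e => x ∉ e ∧ (∃ v ∈ e, v ∈ WG) ∧ (∃ v ∈ e, v ∈ Z)) with hF3
  set F4 : Finset (Sym2 V) := EpC.filter (fun e => x ∉ e ∧ ∀ v ∈ e, v ∈ Z) with hF4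
  have hsym2mem : ∀ e : Sym2 V, ∃ v : V, v ∈ e := by
    intro e
    refine Sym2.ind (fun a b => ⟨a, ?_⟩) e
    simp
  have hsum : F1.card + F2.card + F3.card + F4.card ≤ A := by
    have d12 : Disjoint F1 F2 := by
      rw [Finset.disjoint_left]; intro e h1 h2
      exact (Finset.mem_filter.1 h2).2.1 (Finset.mem_filter.1 h1).2
    have d13 : Disjoint F1 F3 := by
      rw [Finset.disjoint_left]; intro e h1 h2
      exact (Finset.mem_filter.1 h2).2.1 (Finset.mem_filter.1 h1).2
    have d14 : Disjoint F1 F4 := by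
      rw [Finset.disjoint_left]; intro e h1 h2
      exact (Finset.mem_filter.1 h2).2.1 (Finset.mem_filter.1 h1).2
    have d23 : Disjoint F2 F3 := by
      rw [Finset.disjoint_left]; intro e h1 h2
      obtain ⟨v, hv, hvZ⟩ := (Finset.mem_filter.1 h2).2.2.2
      exact hWGZ v ((Finset.mem_filter.1 h1).2.2 v hv) hvZ
    have d24 : Disjoint F2 F4 := by
      rw [Finset.disjoint_left]; intro e h1 h2
      obtain ⟨v, hv⟩ := hsym2mem e
      exact hWGZ v ((Finset.mem_filter.1 h1).2.2 v hv)
        ((Finset.mem_filter.1 h2).2.2 v hv)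
    have d34 : Disjoint F3 F4 := by
      rw [Finset.disjoint_left]; intro e h1 h2
      obtain ⟨v, hv, hvW⟩ := (Finset.mem_filter.1 h1).2.2.1
      exact hWGZ v hvW ((Finset.mem_filter.1 h2).2.2 v hv)
    have hu : ((F1 ∪ F2) ∪ (F3 ∪ F4)).card = F1.card + F2.card + F3.card + F4.card := by
      rw [Finset.card_union_of_disjoint, Finset.card_union_of_disjoint d12,
        Finset.card_union_of_disjoint d34]
      · ring
      · rw [Finset.disjoint_union_right, Finset.disjoint_union_left,
          Finset.disjoint_union_left]
        exact ⟨⟨d13, d23⟩, d14, d24⟩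
    rw [← hu]
    refine Finset.card_le_card ?_
    refine Finset.union_subset (Finset.union_subset ?_ ?_) (Finset.union_subset ?_ ?_) <;>
      exact Finset.filter_subset _ _
  have hF1z : z ≤ F1.card := by
    refine Finset.card_le_card_of_injOn (fun c => s(x,c)) ?_ hinjxZ
    intro c hc
    dsimp only
    refine Finset.mem_filter.2 ⟨Finset.mem_filter.2 ⟨(Finset.mem_filter.1 hc).2, ?_⟩, by simp⟩
    exact (hinCs x c).2 ⟨hxCs, hZCs hc⟩
  -- petal counting
  set m : ℕ := (WG.image κ).card with hmdef
  have hmS : m ≤ Sg := Finset.card_image_le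
  have hSg1 : 1 ≤ Sg := le_trans hz1 hzS
  have hm1 : 1 ≤ m := by
    obtain ⟨w, hw⟩ := Finset.card_pos.1 hSg1
    exact Finset.card_pos.2 ⟨κ w, Finset.mem_image_of_mem κ hw⟩
  set OC : Finset (V × V) := WG.offDiag.filter (fun p => κ p.1 ≠ κ p.2) with hOCdef
  have hOCmem : ∀ p ∈ OC, p.1 ∈ WG ∧ p.2 ∈ WG ∧ p.1 ≠ p.2 ∧ κ p.1 ≠ κ p.2 := by
    intro p hp
    have h1 := Finset.mem_filter.1 hp
    have h2 := Finset.mem_offDiag.1 h1.1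
    exact ⟨h2.1, h2.2.1, h2.2.2, h1.2⟩
  have hOCdouble : OC.card = 2 * (OC.image (fun p => s(p.1,p.2))).card := by
    refine double_image _ (fun p hp => (hOCmem p hp).2.2.1) ?_
    intro p hp
    obtain ⟨h1, h2, h3, h4⟩ := hOCmem p hp
    exact Finset.mem_filter.2 ⟨Finset.mem_offDiag.2 ⟨h2, h1, h3.symm⟩, h4.symm⟩
  have hOCimg : OC.image (fun p => s(p.1,p.2)) ⊆ F2 := by
    intro e he
    obtain ⟨p, hp, rfl⟩ := Finset.mem_image.1 he
    obtain ⟨h1, h2, h3, h4⟩ := hOCmem p hp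
    have hEpmem : s(p.1,p.2) ∈ Ep := by
      have hadj : H.Adj p.1 p.2 := hCsAdj _ (hWGCs h1) _ (hWGCs h2) h3
      rcases (edited_adj h p.1 p.2).1 hadj with ⟨hg, -⟩ | hpe
      · exact absurd (hP2a _ h1 _ h2 h3 hg) h4
      · exact hpe
    refine Finset.mem_filter.2 ⟨Finset.mem_filter.2
      ⟨hEpmem, (hinCs _ _).2 ⟨hWGCs h1, hWGCs h2⟩⟩, ?_, ?_⟩
    · intro hx'
      rcases Sym2.mem_iff.1 hx' with h' | h'
      · exact hxWG (h' ▸ h1)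
      · exact hxWG (h' ▸ h2)
    · intro v hv
      rcases Sym2.mem_iff.1 hv with rfl | rfl
      · exact h1
      · exact h2
  have hρex : ∀ L : Finset V, ∃ w : V, L ∈ WG.image κ → (w ∈ WG ∧ κ w = L) := by
    intro L
    by_cases hL : L ∈ WG.image κ
    · obtain ⟨w, hw, hkw⟩ := Finset.mem_image.1 hL
      exact ⟨w, fun _ => ⟨hw, hkw⟩⟩
    · exact ⟨x, fun h' => absurd h' hL⟩
  choose ρ hρ using hρex
  have hOClow : m * m - m ≤ OC.card := by
    have hle : ((WG.image κ).offDiag).card ≤ OC.card := by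
      refine Finset.card_le_card_of_injOn (fun q => (ρ q.1, ρ q.2)) ?_ ?_
      · intro q hq
        dsimp only
        have h1 := Finset.mem_offDiag.1 hq
        obtain ⟨hw1, hk1⟩ := hρ q.1 h1.1
        obtain ⟨hw2, hk2⟩ := hρ q.2 h1.2.1
        refine Finset.mem_filter.2 ⟨Finset.mem_offDiag.2 ⟨hw1, hw2, ?_⟩, ?_⟩
        · intro hEq
          exact h1.2.2 (by rw [← hk1, ← hk2]; exact congrArg κ hEq)
        · show κ (ρ q.1) ≠ κ (ρ q.2)
          rw [hk1, hk2]; exact h1.2.2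
      · intro q hq q' hq' hEq
        dsimp only at hEq
        have h1 := Finset.mem_offDiag.1 (Finset.mem_coe.1 hq)
        have h1' := Finset.mem_offDiag.1 (Finset.mem_coe.1 hq')
        obtain ⟨hw1, hk1⟩ := hρ q.1 h1.1
        obtain ⟨hw2, hk2⟩ := hρ q.2 h1.2.1
        obtain ⟨hw1', hk1'⟩ := hρ q'.1 h1'.1
        obtain ⟨hw2', hk2'⟩ := hρ q'.2 h1'.2.1
        have e1 : ρ q.1 = ρ q'.1 := (Prod.ext_iff.1 hEq).1
        have e2 : ρ q.2 = ρ q'.2 := (Prod.ext_iff.1 hEq).2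
        have f1 : q.1 = q'.1 := by rw [← hk1, ← hk1', e1]
        have f2 : q.2 = q'.2 := by rw [← hk2, ← hk2', e2]
        exact Prod.ext f1 f2
    calc m * m - m = ((WG.image κ).offDiag).card := by rw [Finset.offDiag_card]
      _ ≤ OC.card := hle
  have hF2b : m * m ≤ 2 * F2.card + m := by
    have h1 : m * m - m ≤ 2 * F2.card := by
      calc m * m - m ≤ OC.card := hOClow
        _ = 2 * (OC.image (fun p => s(p.1,p.2))).card := hOCdouble
        _ ≤ 2 * F2.card := by
            have := Finset.card_le_card hOCimg
            omega
    have h2 : m ≤ m * m := Nat.le_mul_of_pos_left m (by omega)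
    omega
  -- F3 bound
  set WZ : Finset (V × V) := WG ×ˢ Z with hWZdef
  set WZEp : Finset (V × V) := WZ.filter (fun p => s(p.1,p.2) ∈ Ep) with hWZEp
  set WZG : Finset (V × V) := WZ.filter (fun p => ¬ s(p.1,p.2) ∈ Ep) with hWZG
  have hWZsplit : WZEp.card + WZG.card = Sg * z := by
    rw [hWZEp, hWZG, Finset.card_filter_add_card_filter_not, hWZdef,
      Finset.card_product]
  have hWZmem : ∀ p ∈ WZ, p.1 ∈ WG ∧ p.2 ∈ Z := fun p hp => Finset.mem_product.1 hp
  have hWZne : ∀ p ∈ WZ, p.1 ≠ p.2 := by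
    intro p hp hEq
    exact hWGZ _ (hWZmem p hp).1 (hEq ▸ (hWZmem p hp).2)
  have hWZEpF3 : WZEp.card ≤ F3.card := by
    refine Finset.card_le_card_of_injOn (fun p => s(p.1,p.2)) ?_ ?_
    · intro p hp
      dsimp only
      have h0 := Finset.mem_filter.1 hp
      obtain ⟨h1, h2⟩ := hWZmem p h0.1
      refine Finset.mem_filter.2 ⟨Finset.mem_filter.2
        ⟨h0.2, (hinCs _ _).2 ⟨hWGCs h1, hZCs h2⟩⟩, ?_, ⟨p.1, Sym2.mem_mk_left p.1 p.2, h1⟩,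
        ⟨p.2, Sym2.mem_mk_right p.1 p.2, h2⟩⟩
      intro hx'
      rcases Sym2.mem_iff.1 hx' with h' | h'
      · exact hxWG (h' ▸ h1)
      · exact hxZ (h' ▸ h2)
    · intro p hp p' hp' hEq
      dsimp only at hEq
      have h0 := Finset.mem_filter.1 (Finset.mem_coe.1 hp)
      have h0' := Finset.mem_filter.1 (Finset.mem_coe.1 hp')
      obtain ⟨h1, h2⟩ := hWZmem p h0.1
      obtain ⟨h1', h2'⟩ := hWZmem p' h0'.1
      simp only [Sym2.eq_iff] at hEq
      rcases hEq with ⟨f1, f2⟩ | ⟨f1, f2⟩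
      · exact Prod.ext f1 f2
      · exact absurd (f1 ▸ h1) (fun h' => hWGZ _ h' h2')
  have hWZGm : WZG.card ≤ m * z := by
    have hmz : ((WG.image κ) ×ˢ Z).card = m * z := by
      rw [Finset.card_product]
    rw [← hmz]
    refine Finset.card_le_card_of_injOn (fun p => (κ p.1, p.2)) ?_ ?_
    · intro p hp
      dsimp only
      have h0 := Finset.mem_filter.1 hp
      obtain ⟨h1, h2⟩ := hWZmem p h0.1
      exact Finset.mem_product.2 ⟨Finset.mem_image_of_mem κ h1, h2⟩
    · intro p hp p' hp' hEq
      dsimp only at hEq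
      have h0 := Finset.mem_filter.1 (Finset.mem_coe.1 hp)
      have h0' := Finset.mem_filter.1 (Finset.mem_coe.1 hp')
      obtain ⟨h1, h2⟩ := hWZmem p h0.1
      obtain ⟨h1', h2'⟩ := hWZmem p' h0'.1
      have ek : κ p.1 = κ p'.1 := (Prod.ext_iff.1 hEq).1
      have ez : p.2 = p'.2 := (Prod.ext_iff.1 hEq).2
      have hg : G.Adj p.1 p.2 := by
        have hadj : H.Adj p.1 p.2 := hCsAdj _ (hWGCs h1) _ (hZCs h2) (hWZne _ h0.1)
        rcases (edited_adj h _ _).1 hadj with ⟨hg, -⟩ | hpe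
        · exact hg
        · exact absurd hpe h0.2
      have hg' : G.Adj p'.1 p'.2 := by
        have hadj : H.Adj p'.1 p'.2 := hCsAdj _ (hWGCs h1') _ (hZCs h2') (hWZne _ h0'.1)
        rcases (edited_adj h _ _).1 hadj with ⟨hg', -⟩ | hpe
        · exact hg'
        · exact absurd hpe h0'.2
      by_cases hne : p.1 = p'.1
      · exact Prod.ext hne ez
      · exact (hP3 p.2 h2 p.1 h1 p'.1 h1' hne ek hg.symm
          (by rw [ez]; exact hg'.symm)).elim
  have hF3b : Sg * z ≤ F3.card + m * z := by
    have := hWZEpF3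
    have := hWZGm
    omega
  -- F4 bound
  set ZOEp : Finset (V × V) := Z.offDiag.filter (fun p => s(p.1,p.2) ∈ Ep) with hZOEp
  have hZOG' : ZOG = Z.offDiag.filter (fun p => ¬ s(p.1,p.2) ∈ Ep) := by
    ext p
    rw [hZOGdef, Finset.mem_filter, Finset.mem_filter]
    constructor
    · rintro ⟨h1, hg, hm⟩
      exact ⟨h1, fun hpe => not_gadj_of_ep h hpe hg⟩
    · rintro ⟨h1, hnp⟩
      have h2 := Finset.mem_offDiag.1 h1
      have hadj : H.Adj p.1 p.2 := hCsAdj _ (hZCs h2.1) _ (hZCs h2.2.1) h2.2.2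
      rcases (edited_adj h _ _).1 hadj with ⟨hg, hm⟩ | hpe
      · exact ⟨h1, hg, hm⟩
      · exact absurd hpe hnp
  have hZOsplit : ZOEp.card + ZOG.card = z * z - z := by
    rw [hZOEp, hZOG', Finset.card_filter_add_card_filter_not,
      Finset.offDiag_card]
  have hZOGd : ZOG.card = 2 * tZ := by
    refine double_image _ ?_ ?_
    · intro p hp
      exact (Finset.mem_offDiag.1 (Finset.mem_filter.1 hp).1).2.2
    · intro p hp
      have h1 := Finset.mem_filter.1 hp
      have h2 := Finset.mem_offDiag.1 h1.1
      refine Finset.mem_filter.2 ⟨Finset.mem_offDiag.2 ⟨h2.2.1, h2.1, h2.2.2.symm⟩,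
        h1.2.1.symm, ?_⟩
      rw [Sym2.eq_swap]; exact h1.2.2
  have hZOEpd : ZOEp.card = 2 * ((ZOEp.image (fun p => s(p.1,p.2))).card) := by
    refine double_image _ ?_ ?_
    · intro p hp
      exact (Finset.mem_offDiag.1 (Finset.mem_filter.1 hp).1).2.2
    · intro p hp
      have h1 := Finset.mem_filter.1 hp
      have h2 := Finset.mem_offDiag.1 h1.1
      refine Finset.mem_filter.2 ⟨Finset.mem_offDiag.2 ⟨h2.2.1, h2.1, h2.2.2.symm⟩, ?_⟩
      rw [Sym2.eq_swap]; exact h1.2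
  have hZOEpimg : ZOEp.image (fun p => s(p.1,p.2)) ⊆ F4 := by
    intro e he
    obtain ⟨p, hp, rfl⟩ := Finset.mem_image.1 he
    have h1 := Finset.mem_filter.1 hp
    have h2 := Finset.mem_offDiag.1 h1.1
    refine Finset.mem_filter.2 ⟨Finset.mem_filter.2
      ⟨h1.2, (hinCs _ _).2 ⟨hZCs h2.1, hZCs h2.2.1⟩⟩, ?_, ?_⟩
    · intro hx'
      rcases Sym2.mem_iff.1 hx' with h' | h'
      · exact hxZ (h' ▸ h2.1)
      · exact hxZ (h' ▸ h2.2.1)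
    · intro v hv
      rcases Sym2.mem_iff.1 hv with rfl | rfl
      · exact h2.1
      · exact h2.2.1
  have hF4b : z * z ≤ 2 * F4.card + 2 * tZ + z := by
    have h1 : ZOEp.card ≤ 2 * F4.card := by
      rw [hZOEpd]
      have := Finset.card_le_card hZOEpimg
      omega
    have h2 : z ≤ z * z := Nat.le_mul_of_pos_left z (by omega)
    omega
  have htZb : 2 * tZ + z ≤ z * z := by
    have h1 : ZOG.card ≤ Z.offDiag.card := by
      rw [hZOG']; exact Finset.card_le_card (Finset.filter_subset _ _)
    rw [Finset.offDiag_card] at h1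
    have h2 : z ≤ z * z := Nat.le_mul_of_pos_left z (by omega)
    omega
  -- final arithmetic contradiction
  have key3 : m * m + 2 * (Sg * z) + 3 * z ≤ z * z + m + 2 * (m * z) := by
    linarith [hsum, hAtZ, hF1z, hF2b, hF3b, hF4b, htZb]
  have q1 : (z : ℤ) ≤ (Sg : ℤ) := by exact_mod_cast hzS
  have q2 : (m : ℤ) ≤ (Sg : ℤ) := by exact_mod_cast hmS
  have q3 : (1 : ℤ) ≤ (z : ℤ) := by exact_mod_cast hz1
  have q4 : (1 : ℤ) ≤ (m : ℤ) := by exact_mod_cast hm1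
  have k3 : (m : ℤ) * m + 2 * ((Sg : ℤ) * z) + 3 * z ≤ (z : ℤ) * z + m + 2 * ((m : ℤ) * z) := by
    exact_mod_cast key3
  have h3z : 3 * (z : ℤ) ≤ (m : ℤ) := by
    nlinarith [sq_nonneg ((z : ℤ) - m), mul_le_mul_of_nonneg_right q1 (by linarith : (0:ℤ) ≤ z)]
  nlinarith [mul_le_mul_of_nonneg_right q2 (by linarith : (0:ℤ) ≤ z),
    mul_le_mul_of_nonneg_right h3z (by linarith : (0:ℤ) ≤ (m : ℤ) - 1),
    mul_le_mul_of_nonneg_right q1 (by linarith : (0:ℤ) ≤ z)]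



end NoEp

/-- for a minimum solution to a reduced yes-instance, a maximal
clique containing both ends of a deleted edge is either a small type-I maximal
clique, or a type-II maximal clique intersecting a small type-I one. -/
theorem stmt9 [Fintype V] [DecidableEq V] (G : SimpleGraph V) (k : ℕ)
    (hred : Reduced G k) (hyes : YesInstance G k)
    (Ep Em : Finset (Sym2 V)) (hmin : IsMinSolution G k Ep Em)
    (K : Finset V) (hK : IsMaxClique G K)
    (u v : V) (hmem : s(u, v) ∈ Em) (hu : u ∈ K) (hv : v ∈ K) :
    SmallTypeI G k K ∨
    (TypeII G K ∧ ∃ K' : Finset V, SmallTypeI G k K' ∧ (K ∩ K').Nonempty) := by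
  classical
  obtain ⟨⟨hEp, hEm, hk, hdf⟩, hmin2⟩ := hmin
  have h : EditHyp G Ep Em := ⟨hEp, hEm⟩
  set H := EditedGraph G Ep Em with hH
  have hsmall : K.card < 3 * k + 2 := clique_small h hdf hk hmem hK.1 hu hv
  rcases typeI_or_typeII hK with hI | hII
  · exact Or.inl ⟨hI, hsmall⟩
  right
  refine ⟨hII, ?_⟩
  by_contra hno
  push_neg at hno
  have hno' : ∀ K', SmallTypeI G k K' → (K ∩ K').Nonempty → False := by
    intro K' h1 h2
    exact Finset.not_nonempty_iff_eq_empty.2 (hno K' h1) h2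
  -- Lemma A : no added pair touches K
  have hA : ∀ a b : V, s(a,b) ∈ Ep → a ∉ K := by
    intro a b hab haK
    exact no_ep_at_K hred h hdf hk hmin2 hII hno' haK hab
  have hA2 : ∀ e ∈ Ep, ∀ a ∈ e, a ∉ K := by
    intro e
    induction e using Sym2.ind with
    | _ p q =>
      intro he a hae haK
      rcases Sym2.mem_iff.1 hae with rfl | rfl
      · exact hA a q he haK
      · exact hA a p (by rw [Sym2.eq_swap]; exact he) haK
  -- an H-edge with an endpoint in K is a surviving G-edge
  have hHK : ∀ a ∈ K, ∀ b : V, H.Adj a b → G.Adj a b ∧ s(a,b) ∉ Em := by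
    intro a ha b hab
    rcases (edited_adj h a b).1 hab with ⟨hg, hm⟩ | hpe
    · exact ⟨hg, hm⟩
    · exact absurd ha (hA2 _ hpe a (by simp))
  -- the type-II pair property
  have hKpair : ∀ a ∈ K, ∀ b ∈ K, a ≠ b → ∀ c : V, G.Adj a c → G.Adj b c → c ∈ K := by
    intro a ha b hb hab c h1 h2
    exact typeII_mem hII ha hb hab h1.symm h2.symm
  -- the main exchange: restore all deleted edges inside K
  set Em5 : Finset (Sym2 V) := Em.filter (fun e => ¬ ∀ w ∈ e, w ∈ K) with hEm5
  have hEm5sub : Em5 ⊆ Em := Finset.filter_subset _ _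
  have huvK : ∀ w ∈ s(u,v), w ∈ K := by
    intro w hw
    rcases Sym2.mem_iff.1 hw with rfl | rfl
    · exact hu
    · exact hv
  have huvEm5 : s(u,v) ∉ Em5 := by
    intro h'
    exact (Finset.mem_filter.1 h').2 huvK
  have hEm5lt : Em5.card < Em.card :=
    Finset.card_lt_card (Finset.ssubset_iff_of_subset hEm5sub |>.2 ⟨s(u,v), hmem, huvEm5⟩)
  have h5 : EditHyp G Ep Em5 := ⟨hEp, fun e he => hEm e (hEm5sub he)⟩
  set H5 := EditedGraph G Ep Em5 with hH5
  have h5in : ∀ a ∈ K, ∀ b ∈ K, a ≠ b → H5.Adj a b := by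
    intro a ha b hb hab
    refine adj_of_g h5 (hK.1 (by exact_mod_cast ha) (by exact_mod_cast hb) hab) ?_
    intro h'
    refine (Finset.mem_filter.1 h').2 ?_
    intro w hw
    rcases Sym2.mem_iff.1 hw with rfl | rfl
    · exact ha
    · exact hb
  have h5out : ∀ a b : V, ¬(a ∈ K ∧ b ∈ K) → (H5.Adj a b ↔ H.Adj a b) := by
    intro a b hnot
    rw [edited_adj h5, edited_adj h]
    have : s(a,b) ∈ Em5 ↔ s(a,b) ∈ Em := by
      rw [hEm5, Finset.mem_filter]
      constructor
      · exact fun h' => h'.1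
      · intro h'
        refine ⟨h', fun hall => hnot ⟨hall a (by simp), hall b (by simp)⟩⟩
    rw [this]
  have hdf5 : DiamondFree H5 := by
    intro a b c d hdia
    obtain ⟨nab, nac, nad, nbc, nbd, ncd, Aab, Aac, Aad, Abc, Abd, Ncd⟩ := hdia
    have hcd' : ¬(c ∈ K ∧ d ∈ K) := fun ⟨h1, h2⟩ => Ncd (h5in c h1 d h2 ncd)
    by_cases habK : a ∈ K ∧ b ∈ K
    · -- both apexes in K : leaves get pulled into K, contradiction
      have hcK : c ∈ K := by
        by_contra hcK
        have h1 := (hHK a habK.1 c ((h5out a c (fun h' => hcK h'.2)).1 Aac)).1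
        have h2 := (hHK b habK.2 c ((h5out b c (fun h' => hcK h'.2)).1 Abc)).1
        exact hcK (hKpair a habK.1 b habK.2 nab c h1 h2)
      have hdK : d ∈ K := by
        by_contra hdK
        have h1 := (hHK a habK.1 d ((h5out a d (fun h' => hdK h'.2)).1 Aad)).1
        have h2 := (hHK b habK.2 d ((h5out b d (fun h' => hdK h'.2)).1 Abd)).1
        exact hdK (hKpair a habK.1 b habK.2 nab d h1 h2)
      exact hcd' ⟨hcK, hdK⟩
    · -- at most one apex in K
      -- helper : an apex–leaf edge inside K pulls the other apex into K
      have hpull : ∀ p ∈ K, ∀ q ∈ K, p ≠ q → ∀ r : V, r ∉ K →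
          H5.Adj p r → H5.Adj q r → False := by
        intro p hp q hq hpq r hr A1 A2
        have h1 := (hHK p hp r ((h5out p r (fun h' => hr h'.2)).1 A1)).1
        have h2 := (hHK q hq r ((h5out q r (fun h' => hr h'.2)).1 A2)).1
        exact hr (hKpair p hp q hq hpq r h1 h2)
      by_cases hacK : a ∈ K ∧ c ∈ K
      · -- b ∉ K
        have hbK : b ∉ K := fun h' => habK ⟨hacK.1, h'⟩
        exact hpull a hacK.1 c hacK.2 nac b hbK Aab Abc.symm
      by_cases hadK : a ∈ K ∧ d ∈ K
      · have hbK : b ∉ K := fun h' => habK ⟨hadK.1, h'⟩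
        exact hpull a hadK.1 d hadK.2 nad b hbK Aab Abd.symm
      by_cases hbcK : b ∈ K ∧ c ∈ K
      · have haK : a ∉ K := fun h' => habK ⟨h', hbcK.1⟩
        exact hpull b hbcK.1 c hbcK.2 nbc a haK Aab.symm Aac.symm
      by_cases hbdK : b ∈ K ∧ d ∈ K
      · have haK : a ∉ K := fun h' => habK ⟨h', hbdK.1⟩
        exact hpull b hbdK.1 d hbdK.2 nbd a haK Aab.symm Aad.symm
      · -- no pair of the diamond lies inside K : it is an H-diamond
        have t1 : H.Adj a b := (h5out a b habK).1 Aab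
        have t2 : H.Adj a c := (h5out a c hacK).1 Aac
        have t3 : H.Adj a d := (h5out a d hadK).1 Aad
        have t4 : H.Adj b c := (h5out b c hbcK).1 Abc
        have t5 : H.Adj b d := (h5out b d hbdK).1 Abd
        have t6 : ¬ H.Adj c d := fun h' => Ncd ((h5out c d hcd').2 h')
        exact hdf a b c d ⟨nab, nac, nad, nbc, nbd, ncd, t1, t2, t3, t4, t5, t6⟩
  have := hmin2 Ep Em5 hEp h5.hEm hdf5
  omega
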